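/- arXiv:0809.4447 — 9 statements merged into one kernel-verified Lean document; each statement's English description precedes it below -/
import Mathlib

section
/- Let A be a maximal monotone operator on a Hilbert space H. Then for every (x, x*) ∈ H × H one has H_A(x, x*) ≥ ⟨x, x*⟩, where H_A is the Fitzpatrick function of A. -/
/-- For a maximal monotone set `A`, the Fitzpatrick function dominates the
duality pairing everywhere. -/
theorem fitzpatrick_ge_inner
    {H : Type*} [NormedAddCommGroup H] [InnerProductSpace ℝ H]
    (A : Set (H × H))
    (hmono : ∀ p ∈ A, ∀ q ∈ A, (0 : ℝ) ≤ inner ℝ (p.1 - q.1) (p.2 - q.2))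
    (hmax : ∀ x xs : H, (∀ u ∈ A, (0 : ℝ) ≤ inner ℝ (x - u.1) (xs - u.2)) → (x, xs) ∈ A)
    (x xs : H) :
    ((inner ℝ x xs : ℝ) : EReal)
      ≤ ⨆ u ∈ A, (((inner ℝ u.1 xs + inner ℝ x u.2 - inner ℝ u.1 u.2 : ℝ)) : EReal) := by
  by_cases h : ∀ u ∈ A, (0 : ℝ) ≤ inner ℝ (x - u.1) (xs - u.2)
  · have hx : (x, xs) ∈ A := hmax x xs h
    refine le_iSup₂_of_le (x, xs) hx ?_
    apply EReal.coe_le_coe_iff.mpr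
    simp
  · push_neg at h
    obtain ⟨u, hu, hlt⟩ := h
    refine le_iSup₂_of_le u hu ?_
    apply EReal.coe_le_coe_iff.mpr
    have : (inner ℝ (x - u.1) (xs - u.2) : ℝ)
        = inner ℝ x xs - (inner ℝ u.1 xs + inner ℝ x u.2 - inner ℝ u.1 u.2) := by
      simp [inner_sub_sub_self, inner_sub_left, inner_sub_right, real_inner_comm]
      ring
    nlinarith [hlt, this]
end

section
/- Let A be a maximal monotone operator on a Hilbert space H with Fitzpatrick function H_A. Then (x, x*) ∈ A if and only if H_A(x, x*) = ⟨x, x*⟩. -/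
/-- For a maximal monotone set `A`, membership in `A` is characterized by equality
of the Fitzpatrick function with the duality pairing. -/
theorem mem_iff_fitzpatrick_eq_inner
    {H : Type*} [NormedAddCommGroup H] [InnerProductSpace ℝ H]
    (A : Set (H × H))
    (hmono : ∀ p ∈ A, ∀ q ∈ A, (0 : ℝ) ≤ inner ℝ (p.1 - q.1) (p.2 - q.2))
    (hmax : ∀ x xs : H, (∀ u ∈ A, (0 : ℝ) ≤ inner ℝ (x - u.1) (xs - u.2)) → (x, xs) ∈ A)
    (x xs : H) :
    (x, xs) ∈ A ↔
      (⨆ u ∈ A, (((inner ℝ u.1 xs + inner ℝ x u.2 - inner ℝ u.1 u.2 : ℝ)) : EReal))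
        = ((inner ℝ x xs : ℝ) : EReal) := by
  have key : ∀ u : H × H, (0 : ℝ) ≤ inner ℝ (x - u.1) (xs - u.2) ↔
      (inner ℝ u.1 xs + inner ℝ x u.2 - inner ℝ u.1 u.2 : ℝ) ≤ inner ℝ x xs := by
    intro u
    rw [inner_sub_left, inner_sub_right, inner_sub_right]
    constructor <;> intro h <;> linarith [real_inner_comm x u.2, real_inner_comm u.1 xs]
  constructor
  · intro hx
    apply le_antisymm
    · refine iSup₂_le fun u hu => ?_
      exact_mod_cast (key u).1 (hmono (x, xs) hx u hu)
    · have := le_iSup₂ (f := fun (u : H × H) (_ : u ∈ A) =>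
        (((inner ℝ u.1 xs + inner ℝ x u.2 - inner ℝ u.1 u.2 : ℝ)) : EReal)) (x, xs) hx
      refine le_trans (le_of_eq ?_) this
      congr 1
      ring
  · intro h
    refine hmax x xs fun u hu => ?_
    rw [key u]
    have : (((inner ℝ u.1 xs + inner ℝ x u.2 - inner ℝ u.1 u.2 : ℝ)) : EReal)
        ≤ ((inner ℝ x xs : ℝ) : EReal) := h ▸ le_iSup₂ (f := fun (u : H × H) (_ : u ∈ A) =>
        (((inner ℝ u.1 xs + inner ℝ x u.2 - inner ℝ u.1 u.2 : ℝ)) : EReal)) u hu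
    exact_mod_cast this
end

section
/- Let A ⊆ H × H be a monotone set and define the Fitzpatrick function H_A(x, x*) = sup_{(u,u*)∈A} (⟨u, x*⟩ + ⟨x, u*⟩ − ⟨u, u*⟩). If (x, x*) ∈ A, then the pair (x*, x) belongs to the subdifferential of H_A at (x, x*); that is, for all (z, z*) ∈ H × H, ⟨x*, z − x⟩ + ⟨x, z* − x*⟩ + H_A(x, x*) ≤ H_A(z, z*). -/
/-- If `(x, x*) ∈ A` for a monotone set `A`, then `(x*, x)` is a subgradient of the
Fitzpatrick function of `A` at `(x, x*)`. -/
theorem mem_subdifferential_fitzpatrick_of_mem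
    {H : Type*} [NormedAddCommGroup H] [InnerProductSpace ℝ H]
    (A : Set (H × H))
    (hmono : ∀ p ∈ A, ∀ q ∈ A, (0 : ℝ) ≤ inner ℝ (p.1 - q.1) (p.2 - q.2))
    (x xs : H) (hx : (x, xs) ∈ A) :
    ∀ z zs : H,
      (((inner ℝ xs (z - x) + inner ℝ x (zs - xs) : ℝ)) : EReal)
          + (⨆ u ∈ A, (((inner ℝ u.1 xs + inner ℝ x u.2 - inner ℝ u.1 u.2 : ℝ)) : EReal))
        ≤ ⨆ u ∈ A, (((inner ℝ u.1 zs + inner ℝ z u.2 - inner ℝ u.1 u.2 : ℝ)) : EReal) := by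
  intro z zs
  -- The sup at (x, xs) equals ⟨x, xs⟩.
  have hsup : (⨆ u ∈ A, (((inner ℝ u.1 xs + inner ℝ x u.2 - inner ℝ u.1 u.2 : ℝ)) : EReal))
      = ((inner ℝ x xs : ℝ) : EReal) := by
    apply le_antisymm
    · refine iSup₂_le fun u hu => ?_
      have h := hmono (x, xs) hx u hu
      simp only [inner_sub_left, inner_sub_right] at h
      exact_mod_cast by linarith [real_inner_comm x u.2]
    · refine le_trans ?_ (le_iSup₂ (f := fun u (_ : u ∈ A) =>
        (((inner ℝ u.1 xs + inner ℝ x u.2 - inner ℝ u.1 u.2 : ℝ)) : EReal)) (x, xs) hx)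
      exact_mod_cast by simp
  rw [hsup, ← EReal.coe_add]
  refine le_trans ?_ (le_iSup₂ (f := fun u (_ : u ∈ A) =>
      (((inner ℝ u.1 zs + inner ℝ z u.2 - inner ℝ u.1 u.2 : ℝ)) : EReal)) (x, xs) hx)
  apply EReal.coe_le_coe_iff.mpr
  simp only [inner_sub_right]
  have := real_inner_comm x xs
  have := real_inner_comm z xs
  linarith
end

section
/- Let A be a maximal monotone operator on H and H_A its Fitzpatrick function. If (x*, x) is a subgradient of H_A at a point (u, u*) (i.e. H_A(u,u*) + ⟨x*, z − u⟩ + ⟨x, z* − u*⟩ ≤ H_A(z, z*) for all (z, z*)), then ⟨u − x, u* − x*⟩ ≤ ⟨z − x, z* − x*⟩ for every (z, z*) ∈ A. -/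
/-- If `(x*, x)` is a subgradient of the Fitzpatrick function of a maximal monotone
set `A` at `(u, u*)`, then `⟨u - x, u* - x*⟩ ≤ ⟨z - x, z* - x*⟩` for all `(z, z*) ∈ A`. -/
theorem subgradient_fitzpatrick_inner_le
    {H : Type*} [NormedAddCommGroup H] [InnerProductSpace ℝ H]
    (A : Set (H × H))
    (hmono : ∀ p ∈ A, ∀ q ∈ A, (0 : ℝ) ≤ inner ℝ (p.1 - q.1) (p.2 - q.2))
    (hmax : ∀ x xs : H, (∀ u ∈ A, (0 : ℝ) ≤ inner ℝ (x - u.1) (xs - u.2)) → (x, xs) ∈ A)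
    (u us x xs : H)
    (hfin : ∃ c : ℝ, (⨆ p ∈ A, (((inner ℝ p.1 us + inner ℝ u p.2 - inner ℝ p.1 p.2 : ℝ)) : EReal))
      = (c : EReal))
    (hsub : ∀ z zs : H,
      (⨆ p ∈ A, (((inner ℝ p.1 us + inner ℝ u p.2 - inner ℝ p.1 p.2 : ℝ)) : EReal))
          + (((inner ℝ xs (z - u) + inner ℝ x (zs - us) : ℝ)) : EReal)
        ≤ ⨆ p ∈ A, (((inner ℝ p.1 zs + inner ℝ z p.2 - inner ℝ p.1 p.2 : ℝ)) : EReal)) :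
    ∀ z ∈ A, (inner ℝ (u - x) (us - xs) : ℝ) ≤ inner ℝ (z.1 - x) (z.2 - xs) := by
  obtain ⟨c, hc⟩ := hfin
  intro z hz
  -- step 1: ⟨u,us⟩ ≤ c
  have h1 : (inner ℝ u us : ℝ) ≤ c := by
    have hle : ((inner ℝ u us : ℝ) : EReal) ≤ (c : EReal) := by
      rw [← hc]
      by_cases huA : (u, us) ∈ A
      · have := le_iSup₂ (f := fun p (_ : p ∈ A) =>
          (((inner ℝ p.1 us + inner ℝ u p.2 - inner ℝ p.1 p.2 : ℝ)) : EReal)) (u, us) huA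
        simpa [real_inner_comm] using this
      · obtain ⟨p, hp, hneg⟩ : ∃ p ∈ A, (inner ℝ (u - p.1) (us - p.2) : ℝ) < 0 := by
          by_contra hcon
          push_neg at hcon
          exact huA (hmax u us fun q hq => (hcon q hq))
        have hlt : (inner ℝ u us : ℝ) ≤ inner ℝ p.1 us + inner ℝ u p.2 - inner ℝ p.1 p.2 := by
          rw [inner_sub_left, inner_sub_right, inner_sub_right] at hneg
          linarith [real_inner_comm p.1 us]
        calc ((inner ℝ u us : ℝ) : EReal) ≤ _ := EReal.coe_le_coe_iff.mpr hlt
          _ ≤ _ := le_iSup₂ (f := fun p (_ : p ∈ A) =>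
            (((inner ℝ p.1 us + inner ℝ u p.2 - inner ℝ p.1 p.2 : ℝ)) : EReal)) p hp
    exact EReal.coe_le_coe_iff.mp hle
  -- step 2: sup at (z.1,z.2) = ⟨z.1,z.2⟩
  have h2 : (⨆ p ∈ A, (((inner ℝ p.1 z.2 + inner ℝ z.1 p.2 - inner ℝ p.1 p.2 : ℝ)) : EReal))
      = ((inner ℝ z.1 z.2 : ℝ) : EReal) := by
    apply le_antisymm
    · apply iSup₂_le
      intro p hp
      apply EReal.coe_le_coe_iff.mpr
      have hm := hmono z hz p hp
      rw [inner_sub_left, inner_sub_right, inner_sub_right] at hm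
      linarith [real_inner_comm p.1 z.2]
    · have := le_iSup₂ (f := fun p (_ : p ∈ A) =>
        (((inner ℝ p.1 z.2 + inner ℝ z.1 p.2 - inner ℝ p.1 p.2 : ℝ)) : EReal)) z hz
      simpa [real_inner_comm] using this
  have h3 := hsub z.1 z.2
  rw [hc, h2, ← EReal.coe_add] at h3
  have h4 : c + (inner ℝ xs (z.1 - u) + inner ℝ x (z.2 - us) : ℝ) ≤ inner ℝ z.1 z.2 :=
    EReal.coe_le_coe_iff.mp h3
  rw [inner_sub_right, inner_sub_right] at h4
  rw [inner_sub_left, inner_sub_left, inner_sub_right, inner_sub_right,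
    inner_sub_right, inner_sub_right]
  linarith [real_inner_comm xs z.1, real_inner_comm xs u]
end

section
/- Let A be maximal monotone on H. If there exists (u, u*) such that (x*, x) is a subgradient of the Fitzpatrick function H_A at (u, u*) and ⟨u − x, u* − x*⟩ = 0, then (x, x*) ∈ A. -/
/-- If `(x*, x)` is a subgradient of the Fitzpatrick function of a maximal monotone
set `A` at some point `(u, u*)` with `⟨u - x, u* - x*⟩ = 0`, then `(x, x*) ∈ A`. -/
theorem mem_of_subgradient_fitzpatrick
    {H : Type*} [NormedAddCommGroup H] [InnerProductSpace ℝ H]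
    (A : Set (H × H))
    (hmono : ∀ p ∈ A, ∀ q ∈ A, (0 : ℝ) ≤ inner ℝ (p.1 - q.1) (p.2 - q.2))
    (hmax : ∀ x xs : H, (∀ u ∈ A, (0 : ℝ) ≤ inner ℝ (x - u.1) (xs - u.2)) → (x, xs) ∈ A)
    (u us x xs : H)
    (hfin : ∃ c : ℝ, (⨆ p ∈ A, (((inner ℝ p.1 us + inner ℝ u p.2 - inner ℝ p.1 p.2 : ℝ)) : EReal))
      = (c : EReal))
    (hsub : ∀ z zs : H,
      (⨆ p ∈ A, (((inner ℝ p.1 us + inner ℝ u p.2 - inner ℝ p.1 p.2 : ℝ)) : EReal))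
          + (((inner ℝ xs (z - u) + inner ℝ x (zs - us) : ℝ)) : EReal)
        ≤ ⨆ p ∈ A, (((inner ℝ p.1 zs + inner ℝ z p.2 - inner ℝ p.1 p.2 : ℝ)) : EReal))
    (horth : (inner ℝ (u - x) (us - xs) : ℝ) = 0) :
    (x, xs) ∈ A := by
  obtain ⟨c, hc⟩ := hfin
  -- sup is bounded by ⟨z, zs⟩ at points of A
  have hub : ∀ z zs : H, (z, zs) ∈ A →
      (⨆ p ∈ A, (((inner ℝ p.1 zs + inner ℝ z p.2 - inner ℝ p.1 p.2 : ℝ)) : EReal))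
        ≤ ((inner ℝ z zs : ℝ) : EReal) := by
    intro z zs hz
    refine iSup₂_le fun p hp => ?_
    rw [EReal.coe_le_coe_iff]
    have h := hmono (z, zs) hz p hp
    simp only [inner_sub_left, inner_sub_right] at h
    linarith
  -- key inequality from the subgradient property at points of A
  have star : ∀ a ∈ A,
      c + ((inner ℝ xs (a.1 - u) : ℝ) + (inner ℝ x (a.2 - us) : ℝ)) ≤ inner ℝ a.1 a.2 := by
    intro a ha
    have h := (hsub a.1 a.2).trans (hub a.1 a.2 ha)
    rw [hc, ← EReal.coe_add, EReal.coe_le_coe_iff] at h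
    exact h
  -- c ≥ ⟨u, us⟩
  have hterm : ∀ a ∈ A,
      ((inner ℝ a.1 us : ℝ) + (inner ℝ u a.2 : ℝ) - (inner ℝ a.1 a.2 : ℝ)) ≤ c := by
    intro a ha
    have h1 : (((inner ℝ a.1 us + inner ℝ u a.2 - inner ℝ a.1 a.2 : ℝ)) : EReal)
        ≤ ⨆ p ∈ A, (((inner ℝ p.1 us + inner ℝ u p.2 - inner ℝ p.1 p.2 : ℝ)) : EReal) :=
      le_iSup₂ (f := fun p (_ : p ∈ A) =>
        (((inner ℝ p.1 us + inner ℝ u p.2 - inner ℝ p.1 p.2 : ℝ)) : EReal)) a ha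
    rw [hc, EReal.coe_le_coe_iff] at h1
    exact h1
  have hcu : (inner ℝ u us : ℝ) ≤ c := by
    by_cases h : (u, us) ∈ A
    · have := hterm (u, us) h
      simp only at this
      linarith
    · have h2 := mt (hmax u us) h
      push_neg at h2
      obtain ⟨a, ha, hlt⟩ := h2
      have h3 := hterm a ha
      simp only [inner_sub_left, inner_sub_right] at hlt
      linarith
  -- conclude
  apply hmax
  intro a ha
  have h1 := star a ha
  have h0 := horth
  simp only [inner_sub_left, inner_sub_right] at h0 h1 ⊢
  have c1 := real_inner_comm xs a.1
  have c2 := real_inner_comm xs u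
  have c3 := real_inner_comm a.1 xs
  linarith [real_inner_comm u us, real_inner_comm u xs, real_inner_comm x us]
end

section
/- Let A be maximal monotone on H with Fitzpatrick function H_A, and let H_A* denote the convex conjugate on H × H via the pairing ⟨(x,x*),(y*,y)⟩ = ⟨x, y*⟩ + ⟨x*, y⟩. Then (x, x*) ∈ A if and only if H_A*(x*, x) = ⟨x, x*⟩. -/
/-- For a maximal monotone set `A`, `(x, x*) ∈ A` iff the convex conjugate of the
Fitzpatrick function satisfies `H_A^*(x*, x) = ⟨x, x*⟩`. -/
theorem mem_iff_fitzpatrick_conj_eq_inner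
    {H : Type*} [NormedAddCommGroup H] [InnerProductSpace ℝ H]
    (A : Set (H × H))
    (hmono : ∀ p ∈ A, ∀ q ∈ A, (0 : ℝ) ≤ inner ℝ (p.1 - q.1) (p.2 - q.2))
    (hmax : ∀ x xs : H, (∀ u ∈ A, (0 : ℝ) ≤ inner ℝ (x - u.1) (xs - u.2)) → (x, xs) ∈ A)
    (x xs : H) :
    (x, xs) ∈ A ↔
      (⨆ q : H × H,
        ((((inner ℝ q.1 xs + inner ℝ x q.2 : ℝ)) : EReal)
          - ⨆ u ∈ A, (((inner ℝ u.1 q.2 + inner ℝ q.1 u.2 - inner ℝ u.1 u.2 : ℝ)) : EReal)))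
        = ((inner ℝ x xs : ℝ) : EReal) := by
  have expand : ∀ a b c d : H, (inner ℝ (a - b) (c - d) : ℝ)
      = inner ℝ a c - inner ℝ a d - inner ℝ b c + inner ℝ b d := by
    intro a b c d
    simp [inner_sub_left, inner_sub_right]
    ring
  -- For u ∈ A, the Fitzpatrick function evaluated at u equals ⟨u.1, u.2⟩
  have hHA : ∀ u ∈ A,
      (⨆ v ∈ A, ((inner ℝ v.1 u.2 + inner ℝ u.1 v.2 - inner ℝ v.1 v.2 : ℝ) : EReal))
        = ((inner ℝ u.1 u.2 : ℝ) : EReal) := by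
    intro u hu
    apply le_antisymm
    · apply iSup₂_le
      intro v hv
      have h0 := hmono u hu v hv
      rw [expand] at h0
      exact_mod_cast (by linarith : (inner ℝ v.1 u.2 + inner ℝ u.1 v.2 - inner ℝ v.1 v.2 : ℝ)
        ≤ inner ℝ u.1 u.2)
    · have := le_iSup₂ (f := fun v (_ : v ∈ A) =>
        ((inner ℝ v.1 u.2 + inner ℝ u.1 v.2 - inner ℝ v.1 v.2 : ℝ) : EReal)) u hu
      simpa using this
  constructor
  · intro hx
    apply le_antisymm
    · apply iSup_le
      intro q
      have hb : ((inner ℝ x q.2 + inner ℝ q.1 xs - inner ℝ x xs : ℝ) : EReal)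
          ≤ ⨆ u ∈ A, ((inner ℝ u.1 q.2 + inner ℝ q.1 u.2 - inner ℝ u.1 u.2 : ℝ) : EReal) := by
        have := le_iSup₂ (f := fun u (_ : u ∈ A) =>
          ((inner ℝ u.1 q.2 + inner ℝ q.1 u.2 - inner ℝ u.1 u.2 : ℝ) : EReal)) (x, xs) hx
        simpa using this
      calc ((inner ℝ q.1 xs + inner ℝ x q.2 : ℝ) : EReal)
            - ⨆ u ∈ A, ((inner ℝ u.1 q.2 + inner ℝ q.1 u.2 - inner ℝ u.1 u.2 : ℝ) : EReal)
          ≤ ((inner ℝ q.1 xs + inner ℝ x q.2 : ℝ) : EReal)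
            - ((inner ℝ x q.2 + inner ℝ q.1 xs - inner ℝ x xs : ℝ) : EReal) :=
            EReal.sub_le_sub le_rfl hb
        _ = ((inner ℝ x xs : ℝ) : EReal) := by
            rw [← EReal.coe_sub]
            norm_cast
            ring
    · have hq := le_iSup (fun q : H × H =>
        ((inner ℝ q.1 xs + inner ℝ x q.2 : ℝ) : EReal)
          - ⨆ u ∈ A, ((inner ℝ u.1 q.2 + inner ℝ q.1 u.2 - inner ℝ u.1 u.2 : ℝ) : EReal)) (x, xs)
      refine le_trans ?_ hq
      simp only
      rw [hHA (x, xs) hx, ← EReal.coe_sub]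
      norm_cast
      linarith
  · intro hsup
    by_contra hx
    have hne : ¬ ∀ u ∈ A, (0 : ℝ) ≤ inner ℝ (x - u.1) (xs - u.2) :=
      fun h => hx (hmax x xs h)
    push_neg at hne
    obtain ⟨u, huA, hneg⟩ := hne
    have hq := le_iSup (fun q : H × H =>
      ((inner ℝ q.1 xs + inner ℝ x q.2 : ℝ) : EReal)
        - ⨆ v ∈ A, ((inner ℝ v.1 q.2 + inner ℝ q.1 v.2 - inner ℝ v.1 v.2 : ℝ) : EReal)) u
    rw [hsup] at hq
    rw [hHA u huA, ← EReal.coe_sub] at hq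
    have hq' : (inner ℝ u.1 xs + inner ℝ x u.2 - inner ℝ u.1 u.2 : ℝ) ≤ inner ℝ x xs := by
      exact_mod_cast hq
    rw [expand] at hneg
    linarith
end

section
/- The Fitzpatrick function of a maximal monotone operator A is minimal among convex functions f : H × H → ℝ ∪ {+∞} satisfying f(x, x*) ≥ ⟨x, x*⟩ everywhere and f(x, x*) = ⟨x, x*⟩ on A; more precisely, for any such convex f, H_A(x, x*) ≤ f(x, x*) for all (x, x*). -/
/-- Minimality of the Fitzpatrick function: any convex function `f` on `H × H` that
dominates the duality pairing everywhere and agrees with it on `A` dominates `H_A`. -/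
theorem fitzpatrick_minimal
    {H : Type*} [NormedAddCommGroup H] [InnerProductSpace ℝ H]
    (A : Set (H × H)) (f : H × H → EReal)
    (hconv : Convex ℝ {q : (H × H) × ℝ | f q.1 ≤ ((q.2 : ℝ) : EReal)})
    (hge : ∀ p : H × H, ((inner ℝ p.1 p.2 : ℝ) : EReal) ≤ f p)
    (heq : ∀ p ∈ A, f p = ((inner ℝ p.1 p.2 : ℝ) : EReal)) :
    ∀ p : H × H,
      (⨆ u ∈ A, (((inner ℝ u.1 p.2 + inner ℝ p.1 u.2 - inner ℝ u.1 u.2 : ℝ)) : EReal)) ≤ f p := by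
  intro p
  rcases eq_top_or_lt_top (f p) with htop | hlt
  · rw [htop]; exact le_top
  have hbot : f p ≠ ⊥ := by
    intro h
    have := hge p
    rw [h] at this
    exact absurd this (by simp)
  set r := (f p).toReal with hr
  have hfp : f p = (r : EReal) := (EReal.coe_toReal hlt.ne hbot).symm
  rw [hfp]
  refine iSup₂_le fun u hu => ?_
  rw [EReal.coe_le_coe_iff]
  set pp := (inner ℝ p.1 p.2 : ℝ) with hpp
  set tgt := (inner ℝ u.1 p.2 + inner ℝ p.1 u.2 - inner ℝ u.1 u.2 : ℝ) with htgt
  have key : ∀ t ∈ Set.Ioo (0:ℝ) 1, (1 - t) * tgt ≤ r - t * pp := by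
    intro t ht
    have hmem_p : ((p, r) : (H × H) × ℝ) ∈ {q : (H × H) × ℝ | f q.1 ≤ ((q.2 : ℝ) : EReal)} :=
      le_of_eq hfp
    have hmem_u : ((u, (inner ℝ u.1 u.2 : ℝ)) : (H × H) × ℝ) ∈
        {q : (H × H) × ℝ | f q.1 ≤ ((q.2 : ℝ) : EReal)} := le_of_eq (heq u hu)
    have hcomb := hconv (a := t) (b := 1 - t) hmem_p hmem_u ht.1.le (by linarith [ht.2]) (by ring)
    simp only [Set.mem_setOf_eq, Prod.smul_mk, Prod.mk_add_mk, smul_eq_mul] at hcomb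
    have hlow := hge ((t • (p, r) + (1 - t) • (u, (inner ℝ u.1 u.2 : ℝ))).1)
    have hchain := le_trans hlow hcomb
    rw [EReal.coe_le_coe_iff] at hchain
    simp only [Prod.smul_fst, Prod.smul_snd, Prod.fst_add, Prod.snd_add, smul_eq_mul,
      Prod.smul_mk, Prod.mk_add_mk] at hchain
    have hexp : (inner ℝ (t • p.1 + (1 - t) • u.1) (t • p.2 + (1 - t) • u.2) : ℝ)
        = t * t * pp + t * (1 - t) * (inner ℝ p.1 u.2 : ℝ)
          + (1 - t) * t * (inner ℝ u.1 p.2 : ℝ)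
          + (1 - t) * (1 - t) * (inner ℝ u.1 u.2 : ℝ) := by
      simp [inner_add_add_self, inner_add_left, inner_add_right, real_inner_smul_left,
        real_inner_smul_right, hpp]
      ring
    rw [hexp] at hchain
    nlinarith [ht.1, ht.2, hchain]
  have h1 : Filter.Tendsto (fun t : ℝ => (1 - t) * tgt) (nhdsWithin 0 (Set.Ioi 0)) (nhds tgt) := by
    have : Filter.Tendsto (fun t : ℝ => (1 - t) * tgt) (nhds 0) (nhds ((1 - 0) * tgt)) :=
      ((continuous_const.sub continuous_id).mul continuous_const).tendsto 0
    simpa using this.mono_left nhdsWithin_le_nhds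
  have h2 : Filter.Tendsto (fun t : ℝ => r - t * pp) (nhdsWithin 0 (Set.Ioi 0)) (nhds r) := by
    have : Filter.Tendsto (fun t : ℝ => r - t * pp) (nhds 0) (nhds (r - 0 * pp)) :=
      (continuous_const.sub (continuous_id.mul continuous_const)).tendsto 0
    simpa using this.mono_left nhdsWithin_le_nhds
  exact le_of_tendsto_of_tendsto h1 h2 (Filter.eventually_of_mem
    (Ioo_mem_nhdsGT_of_mem ⟨le_refl 0, one_pos⟩) key)
end

section
/- Let A be maximal monotone on a Hilbert space H, and let x, y, k, ℓ : [0, T] → H with k, ℓ of bounded variation and x, y continuous, such that for all 0 ≤ s ≤ t ≤ T and all continuous u, u* : [0,T] → H with (u(r), u*(r)) ∈ A for all r ∈ [s,t]: ∫_s^t ⟨x(r) − u(r), dk(r) − u*(r) dr⟩ ≥ 0, and the same for (y, ℓ). If additionally for every ε > 0 the function r ↦ J_ε((x(r)+y(r))/2) together with A_ε((x(r)+y(r))/2) is a valid continuous selection in A, then ∫_s^t ⟨x(r) − y(r), dk(r) − dℓ(r)⟩ ≥ 0 for all 0 ≤ s ≤ t ≤ T. -/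
open MeasureTheory

/-- `I` is the Riemann–Stieltjes integral `∫_s^t ⟨f(r), dk(r)⟩`, computed as the limit
of left-endpoint Riemann–Stieltjes sums along partitions of `[s,t]` of small mesh. -/
def IsRSIntegral {H : Type*} [NormedAddCommGroup H] [InnerProductSpace ℝ H]
    (f k : ℝ → H) (s t : ℝ) (I : ℝ) : Prop :=
  ∀ ε > (0 : ℝ), ∃ δ > (0 : ℝ), ∀ n : ℕ, ∀ p : ℕ → ℝ,
    p 0 = s → p n = t → (∀ i < n, p i ≤ p (i + 1)) → (∀ i < n, p (i + 1) - p i < δ) →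
    |(∑ i ∈ Finset.range n, (inner ℝ (f (p i)) (k (p (i + 1)) - k (p i)) : ℝ)) - I| < ε

namespace RSAux

noncomputable def RSsum {H : Type*} [NormedAddCommGroup H] [InnerProductSpace ℝ H]
    (f g : ℝ → H) (n : ℕ) (p : ℕ → ℝ) : ℝ :=
  ∑ i ∈ Finset.range n, (inner ℝ (f (p i)) (g (p (i + 1)) - g (p i)) : ℝ)

/-- partial monotonicity -/
lemma part_mono {α : Type*} [Preorder α] {n : ℕ} {p : ℕ → α}
    (hm : ∀ i < n, p i ≤ p (i + 1)) : ∀ i j, i ≤ j → j ≤ n → p i ≤ p j := by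
  intro i j hij hjn
  induction j with
  | zero => simp_all
  | succ m ih =>
    rcases Nat.eq_or_lt_of_le hij with h | h
    · exact le_of_eq (by rw [h])
    · exact le_trans (ih (Nat.lt_succ_iff.mp h) (le_trans (Nat.le_succ m) hjn))
        (hm m (Nat.lt_of_succ_le hjn))

lemma part_mem {s t : ℝ} {n : ℕ} {p : ℕ → ℝ} (h0 : p 0 = s) (hn : p n = t)
    (hm : ∀ i < n, p i ≤ p (i + 1)) : ∀ i ≤ n, p i ∈ Set.Icc s t := by
  intro i hi
  constructor
  · rw [← h0]; exact part_mono hm 0 i (Nat.zero_le i) hi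
  · rw [← hn]; exact part_mono hm i n hi le_rfl

/-- sum of norms of increments bounded by variation -/
lemma sum_norm_sub_le_var {H : Type*} [NormedAddCommGroup H] [InnerProductSpace ℝ H]
    {g : ℝ → H} {a b : ℝ} {N : ℕ} {r : ℕ → ℝ}
    (hrm : ∀ j < N, r j ≤ r (j + 1)) (hmem : ∀ j ≤ N, r j ∈ Set.Icc a b)
    (hg : BoundedVariationOn g (Set.Icc a b)) :
    ∑ j ∈ Finset.range N, ‖g (r (j + 1)) - g (r j)‖
      ≤ (eVariationOn g (Set.Icc a b)).toReal := by
  set u : ℕ → ℝ := fun j => r (min j N) with hu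
  have humono : Monotone u := by
    intro i j hij
    exact part_mono hrm _ _ (min_le_min_right N hij) (min_le_right _ _)
  have humem : ∀ j, u j ∈ Set.Icc a b := fun j => hmem _ (min_le_right _ _)
  have hsum := eVariationOn.sum_le (f := g) (n := N) humono humem
  have heq : ∀ j ∈ Finset.range N,
      ‖g (r (j + 1)) - g (r j)‖ = (edist (g (u (j + 1))) (g (u j))).toReal := by
    intro j hj
    rw [Finset.mem_range] at hj
    have h1 : u j = r j := by simp [hu, min_eq_left hj.le]
    have h2 : u (j + 1) = r (j + 1) := by simp [hu, min_eq_left (Nat.succ_le_of_lt hj)]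
    rw [h1, h2, edist_dist, ENNReal.toReal_ofReal dist_nonneg, dist_eq_norm]
  rw [Finset.sum_congr rfl heq, ← ENNReal.toReal_sum (fun j _ => edist_ne_top _ _)]
  exact ENNReal.toReal_mono hg hsum

lemma RSsum_bound {H : Type*} [NormedAddCommGroup H] [InnerProductSpace ℝ H]
    {f g : ℝ → H} {a b : ℝ} {n : ℕ} {p : ℕ → ℝ}
    (h0 : p 0 = a) (hn : p n = b) (hm : ∀ i < n, p i ≤ p (i + 1))
    {M : ℝ} (hM : ∀ r ∈ Set.Icc a b, ‖f r‖ ≤ M)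
    (hg : BoundedVariationOn g (Set.Icc a b)) :
    |RSsum f g n p| ≤ M * (eVariationOn g (Set.Icc a b)).toReal := by
  have hmem := part_mem h0 hn hm
  calc |RSsum f g n p| ≤ ∑ i ∈ Finset.range n, ‖f (p i)‖ * ‖g (p (i + 1)) - g (p i)‖ := by
        refine le_trans (Finset.abs_sum_le_sum_abs _ _) (Finset.sum_le_sum ?_)
        intro i hi
        exact abs_real_inner_le_norm _ _
    _ ≤ ∑ i ∈ Finset.range n, M * ‖g (p (i + 1)) - g (p i)‖ := by
        refine Finset.sum_le_sum fun i hi => ?_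
        rw [Finset.mem_range] at hi
        exact mul_le_mul_of_nonneg_right (hM _ (hmem i hi.le)) (norm_nonneg _)
    _ = M * ∑ i ∈ Finset.range n, ‖g (p (i + 1)) - g (p i)‖ := by rw [Finset.mul_sum]
    _ ≤ M * (eVariationOn g (Set.Icc a b)).toReal := by
        have hM0 : 0 ≤ M := le_trans (norm_nonneg _) (hM _ (hmem 0 (Nat.zero_le n)))
        exact mul_le_mul_of_nonneg_left
          (sum_norm_sub_le_var (fun j hj => hm j hj) (fun j hj => hmem j hj) hg) hM0

/-- existence of a uniform partition of mesh < δ -/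
lemma exists_uniform (a b : ℝ) (hab : a ≤ b) {δ : ℝ} (hδ : 0 < δ) :
    ∃ n : ℕ, ∃ p : ℕ → ℝ, p 0 = a ∧ p n = b ∧ (∀ i < n, p i ≤ p (i + 1)) ∧
      (∀ i < n, p (i + 1) - p i < δ) := by
  obtain ⟨n, hngt⟩ := exists_nat_gt ((b - a) / δ)
  have hn0 : 0 < (n : ℝ) := lt_of_le_of_lt (div_nonneg (by linarith) hδ.le) hngt
  refine ⟨n, fun i => a + i * ((b - a) / n), by simp, ?_, ?_, ?_⟩
  · field_simp; ring
  · intro i _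
    have : (i : ℝ) ≤ (i : ℝ) + 1 := by linarith
    push_cast
    nlinarith [div_nonneg (sub_nonneg.mpr hab) hn0.le]
  · intro i _
    have key : (b - a) / n < δ := by
      rw [div_lt_iff₀ hn0]
      calc b - a = ((b - a) / δ) * δ := by field_simp
        _ < n * δ := by exact mul_lt_mul_of_pos_right hngt hδ
        _ = δ * n := by ring
    push_cast
    calc a + ((i:ℝ) + 1) * ((b - a) / n) - (a + i * ((b - a) / n)) = (b - a) / n := by ring
      _ < δ := key

lemma IsRSIntegral_bound {H : Type*} [NormedAddCommGroup H] [InnerProductSpace ℝ H]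
    {f g : ℝ → H} {a b I : ℝ} (hab : a ≤ b)
    (hI : IsRSIntegral f g a b I)
    {M : ℝ} (hM : ∀ r ∈ Set.Icc a b, ‖f r‖ ≤ M)
    (hg : BoundedVariationOn g (Set.Icc a b)) :
    |I| ≤ M * (eVariationOn g (Set.Icc a b)).toReal := by
  refine le_of_forall_pos_le_add ?_
  intro ε hε
  obtain ⟨δ, hδ, hpart⟩ := hI ε hε
  obtain ⟨n, p, h0, hn, hm, hmesh⟩ := exists_uniform a b hab hδ
  have h1 := hpart n p h0 hn hm hmesh
  have h2 := RSsum_bound h0 hn hm hM hg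
  have h1' : |RSsum f g n p - I| < ε := h1
  have : |I| = |RSsum f g n p - (RSsum f g n p - I)| := by ring_nf
  rw [this]
  calc |RSsum f g n p - (RSsum f g n p - I)| ≤ |RSsum f g n p| + |RSsum f g n p - I| :=
        abs_sub _ _
    _ ≤ M * (eVariationOn g (Set.Icc a b)).toReal + ε := add_le_add h2 h1'.le

end RSAux

namespace RSAux2

lemma sorted_getD_countP (L : List ℝ) (hL : L.Pairwise (· ≤ ·)) (v : ℝ) (hv : v ∈ L) (d : ℝ) :
    L.getD (L.countP (fun x => decide (x < v))) d = v := by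
  induction L with
  | nil => simp at hv
  | cons a L' ih =>
    rw [List.pairwise_cons] at hL
    by_cases hav : a < v
    · rw [List.countP_cons_of_pos (by simpa using hav), List.getD_cons_succ]
      have hvL' : v ∈ L' := by
        rcases List.mem_cons.mp hv with h | h
        · exact absurd h.symm (ne_of_lt hav)
        · exact h
      exact ih hL.2 hvL'
    · rw [List.countP_cons_of_neg (by simpa using hav)]
      have hva : v ≤ a := not_lt.mp hav
      have hav' : a ≤ v := by
        rcases List.mem_cons.mp hv with h | h
        · exact le_of_eq h.symm
        · exact le_trans (hL.1 v h) le_rfl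
      have hcount : L'.countP (fun x => decide (x < v)) = 0 := by
        rw [List.countP_eq_zero]
        intro x hx
        simp only [decide_eq_true_eq]
        exact not_lt.mpr (le_trans hva (hL.1 x hx))
      rw [hcount, List.getD_cons_zero]
      exact le_antisymm hav' hva

lemma sorted_getD_ge (L : List ℝ) (hL : L.Pairwise (· ≤ ·)) (v : ℝ) (j : ℕ)
    (hj : L.countP (fun x => decide (x < v)) ≤ j) (hjlen : j < L.length) (d : ℝ) :
    v ≤ L.getD j d := by
  induction L generalizing j with
  | nil => simp at hjlen
  | cons a L' ih =>
    rw [List.pairwise_cons] at hL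
    by_cases hav : a < v
    · rw [List.countP_cons_of_pos (by simpa using hav)] at hj
      obtain ⟨j', rfl⟩ : ∃ j', j = j' + 1 := by
        cases j with
        | zero => omega
        | succ j' => exact ⟨j', rfl⟩
      rw [List.getD_cons_succ]
      exact ih hL.2 j' (by omega) (by simpa using hjlen)
    · have hva : v ≤ a := not_lt.mp hav
      cases j with
      | zero => rw [List.getD_cons_zero]; exact hva
      | succ j' =>
        rw [List.getD_cons_succ]
        have hjlen' : j' < L'.length := by simpa using hjlen
        have : L'.getD j' d ∈ L' := by
          rw [List.getD_eq_getElem _ _ hjlen']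
          exact List.getElem_mem _
        exact le_trans hva (hL.1 _ this)

lemma sorted_getD_mono (L : List ℝ) (hL : L.Pairwise (· ≤ ·)) {i j : ℕ} (hij : i ≤ j)
    (hj : j < L.length) (d : ℝ) : L.getD i d ≤ L.getD j d := by
  rcases lt_or_eq_of_le hij with h | h
  · have hi : i < L.length := lt_trans (lt_of_lt_of_le h (le_refl j)) hj
    rw [List.getD_eq_getElem _ _ hi, List.getD_eq_getElem _ _ hj]
    exact List.pairwise_iff_getElem.mp hL i j hi hj h
  · rw [h]

end RSAux2

namespace RSAux2

/-- common refinement of two partitions of `[a,b]` -/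
lemma exists_refinement {a b : ℝ} (hab : a ≤ b) {n m : ℕ} {p q : ℕ → ℝ}
    (hp0 : p 0 = a) (hpn : p n = b) (hpm : ∀ i < n, p i ≤ p (i + 1))
    (hq0 : q 0 = a) (hqm : q m = b) (hqmono : ∀ i < m, q i ≤ q (i + 1)) :
    ∃ (N : ℕ) (r : ℕ → ℝ) (σ τ : ℕ → ℕ),
      (∀ j < N, r j ≤ r (j + 1)) ∧ (∀ j ≤ N, r j ∈ Set.Icc a b) ∧
      ((∀ i < n, σ i ≤ σ (i + 1)) ∧ σ 0 = 0 ∧ σ n ≤ N ∧ (∀ i ≤ n, r (σ i) = p i) ∧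
        (∀ j, σ n ≤ j → j ≤ N → r j = b)) ∧
      ((∀ i < m, τ i ≤ τ (i + 1)) ∧ τ 0 = 0 ∧ τ m ≤ N ∧ (∀ i ≤ m, r (τ i) = q i) ∧
        (∀ j, τ m ≤ j → j ≤ N → r j = b)) := by
  classical
  set S : Finset ℝ := (Finset.range (n + 1)).image p ∪ (Finset.range (m + 1)).image q with hS
  set L : List ℝ := S.sort (· ≤ ·) with hL
  have hsorted : L.Pairwise (· ≤ ·) := Finset.pairwise_sort _ _
  have hmemL : ∀ x, x ∈ L ↔ x ∈ S := fun x => Finset.mem_sort _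
  have hpL : ∀ i ≤ n, p i ∈ L := by
    intro i hi
    rw [hmemL]
    exact Finset.mem_union_left _ (Finset.mem_image_of_mem p (Finset.mem_range.mpr (by omega)))
  have hqL : ∀ i ≤ m, q i ∈ L := by
    intro i hi
    rw [hmemL]
    exact Finset.mem_union_right _ (Finset.mem_image_of_mem q (Finset.mem_range.mpr (by omega)))
  have hLIcc : ∀ x ∈ L, x ∈ Set.Icc a b := by
    intro x hx
    rw [hmemL, hS, Finset.mem_union] at hx
    rcases hx with hx | hx
    · obtain ⟨i, hi, rfl⟩ := Finset.mem_image.mp hx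
      exact RSAux.part_mem hp0 hpn hpm i (by simpa [Nat.lt_succ_iff] using hi)
    · obtain ⟨i, hi, rfl⟩ := Finset.mem_image.mp hx
      exact RSAux.part_mem hq0 hqm hqmono i (by simpa [Nat.lt_succ_iff] using hi)
  have hbL : b ∈ L := hpn ▸ hpL n le_rfl
  have hlen : 1 ≤ L.length := List.length_pos_iff.mpr (List.ne_nil_of_mem hbL)
  set N : ℕ := L.length - 1 with hN
  have hNlen : N + 1 = L.length := Nat.sub_add_cancel hlen
  set r : ℕ → ℝ := fun j => L.getD j b with hr
  set σ : ℕ → ℕ := fun i => L.countP (fun x => decide (x < p i)) with hσ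
  set τ : ℕ → ℕ := fun i => L.countP (fun x => decide (x < q i)) with hτ
  have hcount_lt : ∀ v ∈ L, L.countP (fun x => decide (x < v)) ≤ N := by
    intro v hv
    have h1 : L.countP (fun x => decide (x < v)) ≠ L.length := by
      intro hcontra
      have := List.countP_eq_length.mp hcontra v hv
      simp at this
    have h2 : L.countP (fun x => decide (x < v)) ≤ L.length := L.countP_le_length
    omega
  have hrmono : ∀ j < N, r j ≤ r (j + 1) := by
    intro j hj
    exact sorted_getD_mono L hsorted (Nat.le_succ j) (by omega) b
  have hrmem : ∀ j ≤ N, r j ∈ Set.Icc a b := by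
    intro j hj
    have hjlen : j < L.length := by omega
    refine hLIcc _ ?_
    show L.getD j b ∈ L
    rw [List.getD_eq_getElem _ _ hjlen]
    exact List.getElem_mem _
  have tail : ∀ j, L.countP (fun x => decide (x < b)) ≤ j →
      j ≤ N → r j = b := by
    intro j h1 h2
    have hge := sorted_getD_ge L hsorted b j h1 (by omega) b
    have hle := (hrmem j h2).2
    exact le_antisymm hle hge
  have hside : ∀ (w : ℕ → ℝ) (c : ℕ), w 0 = a → w c = b → (∀ i < c, w i ≤ w (i + 1)) →
      (∀ i ≤ c, w i ∈ L) →
      (∀ i < c, L.countP (fun x => decide (x < w i)) ≤ L.countP (fun x => decide (x < w (i+1)))) ∧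
      L.countP (fun x => decide (x < w 0)) = 0 ∧
      L.countP (fun x => decide (x < w c)) ≤ N ∧
      (∀ i ≤ c, r (L.countP (fun x => decide (x < w i))) = w i) ∧
      (∀ j, L.countP (fun x => decide (x < w c)) ≤ j → j ≤ N → r j = b) := by
    intro w c hw0 hwc hwm hwL
    refine ⟨?_, ?_, ?_, ?_, ?_⟩
    · intro i hi
      refine List.countP_mono_left ?_
      intro x _ hx
      simp only [decide_eq_true_eq] at hx ⊢
      exact lt_of_lt_of_le hx (hwm i hi)
    · rw [hw0, List.countP_eq_zero]
      intro x hx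
      simp only [decide_eq_true_eq]
      exact not_lt.mpr (hLIcc x hx).1
    · exact hwc ▸ hcount_lt _ (hwc ▸ hwL c le_rfl)
    · intro i hi
      exact sorted_getD_countP L hsorted _ (hwL i hi) b
    · intro j h1 h2
      rw [hwc] at h1
      exact tail j h1 h2
  obtain ⟨c1, c2, c3, c4, c5⟩ := hside p n hp0 hpn hpm hpL
  obtain ⟨d1, d2, d3, d4, d5⟩ := hside q m hq0 hqm hqmono hqL
  exact ⟨N, r, σ, τ, hrmono, hrmem, ⟨c1, c2, c3, c4, c5⟩, ⟨d1, d2, d3, d4, d5⟩⟩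

end RSAux2
namespace RSAux

lemma sum_blocks (σ : ℕ → ℕ) (F : ℕ → ℝ) (n : ℕ) (hσ : ∀ i < n, σ i ≤ σ (i + 1)) :
    ∑ j ∈ Finset.Ico (σ 0) (σ n), F j
      = ∑ i ∈ Finset.range n, ∑ j ∈ Finset.Ico (σ i) (σ (i + 1)), F j := by
  induction n with
  | zero => simp
  | succ n ih =>
    have h1 : σ 0 ≤ σ n := part_mono (fun i hi => hσ i (by omega)) 0 n (Nat.zero_le n) le_rfl
    have h2 : σ n ≤ σ (n + 1) := hσ n (by omega)
    rw [Finset.sum_range_succ, ← ih (fun i hi => hσ i (by omega)),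
      Finset.sum_Ico_consecutive _ h1 h2]

lemma telescope {H : Type*} [NormedAddCommGroup H] (G : ℕ → H) {u v : ℕ} (huv : u ≤ v) :
    ∑ j ∈ Finset.Ico u v, (G (j + 1) - G j) = G v - G u := by
  rw [Finset.sum_Ico_eq_sub _ huv, Finset.sum_range_sub, Finset.sum_range_sub]
  abel

/-- Core refinement estimate. -/
lemma refine_est {H : Type*} [NormedAddCommGroup H] [InnerProductSpace ℝ H]
    {f g : ℝ → H} {a b : ℝ} {η δ : ℝ} (hη : 0 ≤ η)
    (hf : ∀ u ∈ Set.Icc a b, ∀ v ∈ Set.Icc a b, dist u v < δ → ‖f u - f v‖ ≤ η)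
    {n : ℕ} {p : ℕ → ℝ} (hp0 : p 0 = a) (hpn : p n = b)
    (hpm : ∀ i < n, p i ≤ p (i + 1)) (hpmesh : ∀ i < n, p (i + 1) - p i < δ)
    {N : ℕ} {r : ℕ → ℝ} (hrm : ∀ j < N, r j ≤ r (j + 1)) (hrmem : ∀ j ≤ N, r j ∈ Set.Icc a b)
    {σ : ℕ → ℕ} (hσm : ∀ i < n, σ i ≤ σ (i + 1)) (hσ0 : σ 0 = 0) (hσN : σ n ≤ N)
    (hpr : ∀ i ≤ n, r (σ i) = p i) (htail : ∀ j, σ n ≤ j → j ≤ N → r j = b) :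
    |RSsum f g n p - RSsum f g N r|
      ≤ η * ∑ j ∈ Finset.range N, ‖g (r (j + 1)) - g (r j)‖ := by
  have hσle : ∀ i ≤ n, σ i ≤ N := fun i hi =>
    le_trans (part_mono hσm i n hi le_rfl) hσN
  -- tail terms of RSsum for r vanish
  have htail0 : ∀ j ∈ Finset.Ico (σ n) N, (inner ℝ (f (r j)) (g (r (j + 1)) - g (r j)) : ℝ) = 0 := by
    intro j hj
    rw [Finset.mem_Ico] at hj
    have h1 : r j = b := htail j hj.1 (by omega)
    have h2 : r (j + 1) = b := htail (j + 1) (by omega) (by omega)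
    rw [h1, h2, sub_self, inner_zero_right]
  have hsplit : RSsum f g N r = ∑ j ∈ Finset.Ico 0 (σ n),
      (inner ℝ (f (r j)) (g (r (j + 1)) - g (r j)) : ℝ) := by
    rw [RSsum, Finset.range_eq_Ico, ← Finset.sum_Ico_consecutive _ (Nat.zero_le (σ n)) hσN,
      Finset.sum_congr rfl htail0]
    simp
  rw [hsplit, ← hσ0, sum_blocks σ _ n hσm, RSsum]
  -- per-block telescoping of RSsum for p
  have hblock : ∀ i ∈ Finset.range n, (inner ℝ (f (p i)) (g (p (i + 1)) - g (p i)) : ℝ)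
      = ∑ j ∈ Finset.Ico (σ i) (σ (i + 1)), (inner ℝ (f (p i)) (g (r (j + 1)) - g (r j)) : ℝ) := by
    intro i hi
    rw [Finset.mem_range] at hi
    have : ∑ j ∈ Finset.Ico (σ i) (σ (i + 1)), (g (r (j + 1)) - g (r j))
        = g (r (σ (i + 1))) - g (r (σ i)) := telescope (fun j => g (r j)) (hσm i hi)
    rw [← hpr i hi.le, ← hpr (i + 1) hi, ← this, inner_sum]
  rw [Finset.sum_congr rfl hblock, ← Finset.sum_sub_distrib]
  have key : ∀ i ∈ Finset.range n,
      |∑ j ∈ Finset.Ico (σ i) (σ (i + 1)),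
          ((inner ℝ (f (p i)) (g (r (j + 1)) - g (r j)) : ℝ)
            - (inner ℝ (f (r j)) (g (r (j + 1)) - g (r j)) : ℝ))|
        ≤ η * ∑ j ∈ Finset.Ico (σ i) (σ (i + 1)), ‖g (r (j + 1)) - g (r j)‖ := by
    intro i hi
    rw [Finset.mem_range] at hi
    rw [Finset.mul_sum]
    refine le_trans (Finset.abs_sum_le_sum_abs _ _) (Finset.sum_le_sum ?_)
    intro j hj
    rw [Finset.mem_Ico] at hj
    rw [← inner_sub_left]
    have hjN : j ≤ N := le_trans hj.2.le (hσle (i + 1) hi)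
    have hrj1 : r j ≤ p (i + 1) := by
      rw [← hpr (i + 1) hi]
      exact part_mono hrm j (σ (i + 1)) hj.2.le (hσle (i + 1) hi)
    have hrj2 : p i ≤ r j := by
      rw [← hpr i hi.le]
      exact part_mono hrm (σ i) j hj.1 hjN
    have hd : dist (p i) (r j) < δ := by
      rw [Real.dist_eq, abs_sub_comm, abs_of_nonneg (by linarith)]
      have := hpmesh i hi
      linarith
    have hnd := hf (p i) (part_mem hp0 hpn hpm i hi.le) (r j) (hrmem j hjN) hd
    calc |(inner ℝ (f (p i) - f (r j)) (g (r (j + 1)) - g (r j)) : ℝ)|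
        ≤ ‖f (p i) - f (r j)‖ * ‖g (r (j + 1)) - g (r j)‖ := abs_real_inner_le_norm _ _
      _ ≤ η * ‖g (r (j + 1)) - g (r j)‖ :=
          mul_le_mul_of_nonneg_right hnd (norm_nonneg _)
  calc |∑ i ∈ Finset.range n, (∑ j ∈ Finset.Ico (σ i) (σ (i+1)),
          (inner ℝ (f (p i)) (g (r (j + 1)) - g (r j)) : ℝ)
        - ∑ j ∈ Finset.Ico (σ i) (σ (i+1)), (inner ℝ (f (r j)) (g (r (j + 1)) - g (r j)) : ℝ))|
      ≤ ∑ i ∈ Finset.range n, |∑ j ∈ Finset.Ico (σ i) (σ (i+1)),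
          ((inner ℝ (f (p i)) (g (r (j + 1)) - g (r j)) : ℝ)
            - (inner ℝ (f (r j)) (g (r (j + 1)) - g (r j)) : ℝ))| := by
        refine le_trans (le_of_eq ?_) (Finset.abs_sum_le_sum_abs _ _)
        congr 1
        refine Finset.sum_congr rfl fun i _ => ?_
        rw [Finset.sum_sub_distrib]
    _ ≤ ∑ i ∈ Finset.range n, η * ∑ j ∈ Finset.Ico (σ i) (σ (i+1)), ‖g (r (j + 1)) - g (r j)‖ :=
        Finset.sum_le_sum key
    _ = η * ∑ j ∈ Finset.Ico (σ 0) (σ n), ‖g (r (j + 1)) - g (r j)‖ := by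
        rw [← Finset.mul_sum, sum_blocks σ _ n hσm]
    _ ≤ η * ∑ j ∈ Finset.range N, ‖g (r (j + 1)) - g (r j)‖ := by
        refine mul_le_mul_of_nonneg_left ?_ hη
        rw [hσ0, ← Finset.range_eq_Ico]
        refine Finset.sum_le_sum_of_subset_of_nonneg ?_ (fun j _ _ => norm_nonneg _)
        exact Finset.range_subset_range.mpr hσN

end RSAux
namespace RSAux

/-- Cauchy estimate: any two fine partitions give close sums. -/
lemma cauchy_est {H : Type*} [NormedAddCommGroup H] [InnerProductSpace ℝ H]
    {f g : ℝ → H} {a b : ℝ} (hab : a ≤ b)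
    (hf : ContinuousOn f (Set.Icc a b)) (hg : BoundedVariationOn g (Set.Icc a b)) :
    ∀ ε > (0:ℝ), ∃ δ > (0:ℝ), ∀ (n : ℕ) (p : ℕ → ℝ) (m : ℕ) (q : ℕ → ℝ),
      p 0 = a → p n = b → (∀ i < n, p i ≤ p (i + 1)) → (∀ i < n, p (i + 1) - p i < δ) →
      q 0 = a → q m = b → (∀ i < m, q i ≤ q (i + 1)) → (∀ i < m, q (i + 1) - q i < δ) →
      |RSsum f g n p - RSsum f g m q| ≤ ε := by
  intro ε hε
  set V : ℝ := (eVariationOn g (Set.Icc a b)).toReal with hV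
  have hV0 : 0 ≤ V := ENNReal.toReal_nonneg
  set η : ℝ := ε / (2 * (V + 1)) with hη
  have hηpos : 0 < η := div_pos hε (by linarith)
  have hunif : UniformContinuousOn f (Set.Icc a b) :=
    isCompact_Icc.uniformContinuousOn_of_continuous hf
  rw [Metric.uniformContinuousOn_iff] at hunif
  obtain ⟨δ, hδ, hfδ⟩ := hunif η hηpos
  refine ⟨δ, hδ, ?_⟩
  intro n p m q hp0 hpn hpm hpmesh hq0 hqm hqmono hqmesh
  obtain ⟨N, r, σ, τ, hrm, hrmem, ⟨c1, c2, c3, c4, c5⟩, ⟨d1, d2, d3, d4, d5⟩⟩ :=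
    RSAux2.exists_refinement hab hp0 hpn hpm hq0 hqm hqmono
  have hfmod : ∀ u ∈ Set.Icc a b, ∀ v ∈ Set.Icc a b, dist u v < δ → ‖f u - f v‖ ≤ η := by
    intro u hu v hv hd
    have := hfδ u hu v hv hd
    rw [dist_eq_norm] at this
    exact this.le
  have e1 := refine_est (g:=g) hηpos.le hfmod hp0 hpn hpm hpmesh hrm hrmem c1 c2 c3 c4 c5
  have e2 := refine_est (g:=g) hηpos.le hfmod hq0 hqm hqmono hqmesh hrm hrmem d1 d2 d3 d4 d5
  have hsum : ∑ j ∈ Finset.range N, ‖g (r (j + 1)) - g (r j)‖ ≤ V :=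
    sum_norm_sub_le_var hrm hrmem hg
  have hb : η * ∑ j ∈ Finset.range N, ‖g (r (j + 1)) - g (r j)‖ ≤ η * V :=
    mul_le_mul_of_nonneg_left hsum hηpos.le
  have hηV : η * V ≤ ε / 2 := by
    rw [hη, div_mul_eq_mul_div, div_le_div_iff₀ (by linarith) (by norm_num)]
    nlinarith
  calc |RSsum f g n p - RSsum f g m q|
      ≤ |RSsum f g n p - RSsum f g N r| + |RSsum f g N r - RSsum f g m q| := abs_sub_le _ _ _
    _ ≤ η * V + η * V := by
        rw [abs_sub_comm (RSsum f g N r)]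
        exact add_le_add (le_trans e1 hb) (le_trans e2 hb)
    _ ≤ ε := by linarith

/-- Existence of the Riemann–Stieltjes integral. -/
lemma exists_isRSIntegral {H : Type*} [NormedAddCommGroup H] [InnerProductSpace ℝ H]
    {f g : ℝ → H} {a b : ℝ} (hab : a ≤ b)
    (hf : ContinuousOn f (Set.Icc a b)) (hg : BoundedVariationOn g (Set.Icc a b)) :
    ∃ I, IsRSIntegral f g a b I := by
  classical
  have key : ∀ j : ℕ, ∃ δ > (0:ℝ), ∀ (n : ℕ) (p : ℕ → ℝ) (m : ℕ) (q : ℕ → ℝ),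
      p 0 = a → p n = b → (∀ i < n, p i ≤ p (i + 1)) → (∀ i < n, p (i + 1) - p i < δ) →
      q 0 = a → q m = b → (∀ i < m, q i ≤ q (i + 1)) → (∀ i < m, q (i + 1) - q i < δ) →
      |RSsum f g n p - RSsum f g m q| ≤ 1 / (j + 1) :=
    fun j => cauchy_est hab hf hg (1 / (j + 1)) (by positivity)
  choose δs hδpos hδkey using key
  set Δ : ℕ → ℝ := fun j => (Finset.range (j + 1)).inf' (by simp) δs with hΔ
  have hΔpos : ∀ j, 0 < Δ j := by
    intro j
    rw [hΔ, Finset.lt_inf'_iff]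
    exact fun i _ => hδpos i
  have hΔle : ∀ i j, i ≤ j → Δ j ≤ δs i := by
    intro i j hij
    exact Finset.inf'_le _ (Finset.mem_range.mpr (by omega))
  have hpickp : ∀ j : ℕ, ∃ (n : ℕ) (p : ℕ → ℝ), p 0 = a ∧ p n = b ∧
      (∀ i < n, p i ≤ p (i + 1)) ∧ (∀ i < n, p (i + 1) - p i < Δ j) :=
    fun j => exists_uniform a b hab (hΔpos j)
  choose ns ps hp0 hpn hpm hpmesh using hpickp
  set S : ℕ → ℝ := fun j => RSsum f g (ns j) (ps j) with hSdef
  have hcauchy : ∀ i j N : ℕ, N ≤ i → N ≤ j → dist (S i) (S j) ≤ 1 / (N + 1) := by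
    intro i j N hNi hNj
    rw [Real.dist_eq]
    refine hδkey N (ns i) (ps i) (ns j) (ps j) (hp0 i) (hpn i) (hpm i)
      (fun w hw => lt_of_lt_of_le (hpmesh i w hw) (hΔle N i hNi))
      (hp0 j) (hpn j) (hpm j)
      (fun w hw => lt_of_lt_of_le (hpmesh j w hw) (hΔle N j hNj))
  have hCS : CauchySeq S :=
    cauchySeq_of_le_tendsto_0 (fun N => 1 / (N + 1)) hcauchy
      tendsto_one_div_add_atTop_nhds_zero_nat
  obtain ⟨I, hI⟩ := cauchySeq_tendsto_of_complete hCS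
  refine ⟨I, ?_⟩
  intro ε hε
  obtain ⟨N, hN⟩ := exists_nat_one_div_lt hε
  refine ⟨Δ N, hΔpos N, ?_⟩
  intro n p h0 hn hm hmesh
  have hclose : ∀ j ≥ N, |RSsum f g n p - S j| ≤ 1 / (N + 1) := by
    intro j hj
    exact hδkey N n p (ns j) (ps j) h0 hn hm
      (fun w hw => lt_of_lt_of_le (hmesh w hw) (hΔle N N le_rfl)) (hp0 j) (hpn j) (hpm j)
      (fun w hw => lt_of_lt_of_le (hpmesh j w hw) (hΔle N j hj))
  have hlim : Filter.Tendsto (fun j => |RSsum f g n p - S j|) Filter.atTop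
      (nhds (|RSsum f g n p - I|)) := by
    exact ((continuous_abs.comp (continuous_const.sub continuous_id)).continuousAt.tendsto.comp hI)
  have : |RSsum f g n p - I| ≤ 1 / (N + 1) :=
    le_of_tendsto hlim (Filter.eventually_atTop.mpr ⟨N, hclose⟩)
  exact lt_of_le_of_lt this hN

end RSAux
namespace RSAux

lemma isRSIntegral_combo {H : Type*} [NormedAddCommGroup H] [InnerProductSpace ℝ H]
    {f₁ f₂ f₃ f₄ g₁ g₂ g₃ g₄ : ℝ → H} {s t I₁ I₃ I₄ : ℝ}
    (h1 : IsRSIntegral f₁ g₁ s t I₁) (h3 : IsRSIntegral f₃ g₃ s t I₃)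
    (h4 : IsRSIntegral f₄ g₄ s t I₄)
    (hpt : ∀ a b : ℝ, (inner ℝ (f₂ a) (g₂ b - g₂ a) : ℝ)
      = (inner ℝ (f₁ a) (g₁ b - g₁ a) : ℝ) + (inner ℝ (f₃ a) (g₃ b - g₃ a) : ℝ)
        - (inner ℝ (f₄ a) (g₄ b - g₄ a) : ℝ)) :
    IsRSIntegral f₂ g₂ s t (I₁ + I₃ - I₄) := by
  intro ε hε
  obtain ⟨δ₁, hδ₁, hp1⟩ := h1 (ε / 3) (by linarith)
  obtain ⟨δ₃, hδ₃, hp3⟩ := h3 (ε / 3) (by linarith)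
  obtain ⟨δ₄, hδ₄, hp4⟩ := h4 (ε / 3) (by linarith)
  refine ⟨min δ₁ (min δ₃ δ₄), by positivity, ?_⟩
  intro n p h0 hn hm hmesh
  have e1 := hp1 n p h0 hn hm (fun i hi => lt_of_lt_of_le (hmesh i hi) (min_le_left _ _))
  have e3 := hp3 n p h0 hn hm (fun i hi => lt_of_lt_of_le (hmesh i hi)
    (le_trans (min_le_right _ _) (min_le_left _ _)))
  have e4 := hp4 n p h0 hn hm (fun i hi => lt_of_lt_of_le (hmesh i hi)
    (le_trans (min_le_right _ _) (min_le_right _ _)))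
  have hsum : (∑ i ∈ Finset.range n, (inner ℝ (f₂ (p i)) (g₂ (p (i + 1)) - g₂ (p i)) : ℝ))
      = (∑ i ∈ Finset.range n, (inner ℝ (f₁ (p i)) (g₁ (p (i + 1)) - g₁ (p i)) : ℝ))
        + (∑ i ∈ Finset.range n, (inner ℝ (f₃ (p i)) (g₃ (p (i + 1)) - g₃ (p i)) : ℝ))
        - (∑ i ∈ Finset.range n, (inner ℝ (f₄ (p i)) (g₄ (p (i + 1)) - g₄ (p i)) : ℝ)) := by
    rw [← Finset.sum_add_distrib, ← Finset.sum_sub_distrib]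
    exact Finset.sum_congr rfl fun i _ => hpt (p i) (p (i + 1))
  rw [hsum]
  set a1 := ∑ i ∈ Finset.range n, (inner ℝ (f₁ (p i)) (g₁ (p (i + 1)) - g₁ (p i)) : ℝ)
  set a3 := ∑ i ∈ Finset.range n, (inner ℝ (f₃ (p i)) (g₃ (p (i + 1)) - g₃ (p i)) : ℝ)
  set a4 := ∑ i ∈ Finset.range n, (inner ℝ (f₄ (p i)) (g₄ (p (i + 1)) - g₄ (p i)) : ℝ)
  have : |a1 + a3 - a4 - (I₁ + I₃ - I₄)| ≤ |a1 - I₁| + |a3 - I₃| + |a4 - I₄| := by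
    have : a1 + a3 - a4 - (I₁ + I₃ - I₄) = (a1 - I₁) + (a3 - I₃) - (a4 - I₄) := by ring
    rw [this]
    calc |(a1 - I₁) + (a3 - I₃) - (a4 - I₄)| ≤ |(a1 - I₁) + (a3 - I₃)| + |a4 - I₄| := abs_sub _ _
      _ ≤ |a1 - I₁| + |a3 - I₃| + |a4 - I₄| := by
          have := abs_add_le (a1 - I₁) (a3 - I₃); linarith
  calc |a1 + a3 - a4 - (I₁ + I₃ - I₄)| ≤ |a1 - I₁| + |a3 - I₃| + |a4 - I₄| := this
    _ < ε / 3 + ε / 3 + ε / 3 := by exact add_lt_add (add_lt_add e1 e3) e4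
    _ = ε := by ring

lemma isRSIntegral_zero {H : Type*} [NormedAddCommGroup H] [InnerProductSpace ℝ H]
    {f g : ℝ → H} {s I : ℝ} (hI : IsRSIntegral f g s s I) : I = 0 := by
  by_contra h
  obtain ⟨δ, hδ, hp⟩ := hI (|I|) (abs_pos.mpr h)
  have := hp 0 (fun _ => s) rfl rfl (by omega) (by omega)
  simp at this

end RSAux
namespace RSAux

lemma eVariationOn_add_le {H : Type*} [NormedAddCommGroup H]
    (f g : ℝ → H) (s : Set ℝ) :
    eVariationOn (fun x => f x + g x) s ≤ eVariationOn f s + eVariationOn g s := by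
  rw [eVariationOn]
  refine iSup_le fun p => ?_
  calc ∑ i ∈ Finset.range p.1, edist (f (p.2.1 (i+1)) + g (p.2.1 (i+1))) (f (p.2.1 i) + g (p.2.1 i))
      ≤ ∑ i ∈ Finset.range p.1,
        (edist (f (p.2.1 (i+1))) (f (p.2.1 i)) + edist (g (p.2.1 (i+1))) (g (p.2.1 i))) :=
        Finset.sum_le_sum fun i _ => edist_add_add_le _ _ _ _
    _ = (∑ i ∈ Finset.range p.1, edist (f (p.2.1 (i+1))) (f (p.2.1 i)))
        + ∑ i ∈ Finset.range p.1, edist (g (p.2.1 (i+1))) (g (p.2.1 i)) :=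
        Finset.sum_add_distrib
    _ ≤ eVariationOn f s + eVariationOn g s :=
        add_le_add (eVariationOn.sum_le (f := f) p.2.2.1 p.2.2.2) (eVariationOn.sum_le (f := g) p.2.2.1 p.2.2.2)

lemma boundedVariationOn_add {H : Type*} [NormedAddCommGroup H]
    {f g : ℝ → H} {s : Set ℝ} (hf : BoundedVariationOn f s) (hg : BoundedVariationOn g s) :
    BoundedVariationOn (fun x => f x + g x) s :=
  ne_top_of_le_ne_top (by simp [ENNReal.add_ne_top, hf, hg, BoundedVariationOn] at *; exact ⟨hf, hg⟩)
    (eVariationOn_add_le f g s)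

section Resolvent

variable {H : Type*} [NormedAddCommGroup H] [InnerProductSpace ℝ H]
variable {A : Set (H × H)} {Jres Ayos : ℝ → H → H}

lemma J_nonexpansive
    (hmono : ∀ p ∈ A, ∀ q ∈ A, (0 : ℝ) ≤ inner ℝ (p.1 - q.1) (p.2 - q.2))
    (hJA : ∀ ε : ℝ, 0 < ε → ∀ z : H, (Jres ε z, Ayos ε z) ∈ A)
    (hdec : ∀ ε : ℝ, 0 < ε → ∀ z : H, z = Jres ε z + ε • Ayos ε z)
    {ε : ℝ} (hε : 0 < ε) (z z' : H) : ‖Jres ε z - Jres ε z'‖ ≤ ‖z - z'‖ := by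
  set u := Jres ε z - Jres ε z' with hu
  set w := Ayos ε z - Ayos ε z' with hw
  have hm : (0:ℝ) ≤ inner ℝ u w := hmono _ (hJA ε hε z) _ (hJA ε hε z')
  have hzz : z - z' = u + ε • w := by
    rw [hu, hw, smul_sub]
    nth_rewrite 1 [hdec ε hε z, hdec ε hε z']
    abel
  have h1 : ‖u‖ ^ 2 = inner ℝ u (z - z') - ε * inner ℝ u w := by
    rw [hzz, inner_add_right, real_inner_smul_right, real_inner_self_eq_norm_sq]
    ring
  have h2 : ‖u‖ ^ 2 ≤ ‖u‖ * ‖z - z'‖ := by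
    calc ‖u‖ ^ 2 ≤ inner ℝ u (z - z') := by nlinarith
      _ ≤ ‖u‖ * ‖z - z'‖ := real_inner_le_norm _ _
  rcases eq_or_lt_of_le (norm_nonneg u) with h | h
  · rw [← h]; exact norm_nonneg _
  · nlinarith

lemma J_dist_dom
    (hmono : ∀ p ∈ A, ∀ q ∈ A, (0 : ℝ) ≤ inner ℝ (p.1 - q.1) (p.2 - q.2))
    (hJA : ∀ ε : ℝ, 0 < ε → ∀ z : H, (Jres ε z, Ayos ε z) ∈ A)
    (hdec : ∀ ε : ℝ, 0 < ε → ∀ z : H, z = Jres ε z + ε • Ayos ε z)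
    {ε : ℝ} (hε : 0 < ε) {d dv : H} (hd : (d, dv) ∈ A) :
    ‖d - Jres ε d‖ ≤ ε * ‖dv‖ := by
  have hm : (0:ℝ) ≤ inner ℝ (Jres ε d - d) (Ayos ε d - dv) := hmono _ (hJA ε hε d) _ hd
  have hh : Jres ε d - d = -(ε • Ayos ε d) := by
    nth_rewrite 2 [hdec ε hε d]
    abel
  rw [hh, inner_neg_left, real_inner_smul_left, inner_sub_right,
    real_inner_self_eq_norm_sq] at hm
  have hA : ‖Ayos ε d‖ ≤ ‖dv‖ := by
    have h1 : ‖Ayos ε d‖ ^ 2 ≤ inner ℝ (Ayos ε d) dv := by nlinarith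
    have h2 : (inner ℝ (Ayos ε d) dv : ℝ) ≤ ‖Ayos ε d‖ * ‖dv‖ := real_inner_le_norm _ _
    rcases eq_or_lt_of_le (norm_nonneg (Ayos ε d)) with h | h
    · rw [← h]; exact norm_nonneg _
    · nlinarith
  have : d - Jres ε d = ε • Ayos ε d := by
    nth_rewrite 1 [hdec ε hε d]
    abel
  rw [this, norm_smul, Real.norm_eq_abs, abs_of_pos hε]
  exact mul_le_mul_of_nonneg_left hA hε.le

lemma uniform_small
    (hmono : ∀ p ∈ A, ∀ q ∈ A, (0 : ℝ) ≤ inner ℝ (p.1 - q.1) (p.2 - q.2))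
    (hJA : ∀ ε : ℝ, 0 < ε → ∀ z : H, (Jres ε z, Ayos ε z) ∈ A)
    (hdec : ∀ ε : ℝ, 0 < ε → ∀ z : H, z = Jres ε z + ε • Ayos ε z)
    {K : Set H} (hK : IsCompact K) (hKcl : K ⊆ closure (Prod.fst '' A))
    {η : ℝ} (hη : 0 < η) :
    ∃ ε₀ > (0:ℝ), ∀ ε : ℝ, 0 < ε → ε ≤ ε₀ → ∀ w ∈ K, ‖w - Jres ε w‖ ≤ η := by
  classical
  have hnet : ∀ w : H, ∃ d dv : H, w ∈ K → (d, dv) ∈ A ∧ dist w d < η / 8 := by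
    intro w
    by_cases hw : w ∈ K
    · obtain ⟨e, he, hde⟩ := Metric.mem_closure_iff.mp (hKcl hw) (η / 8) (by linarith)
      obtain ⟨⟨d, dv⟩, hdA, rfl⟩ := he
      exact ⟨d, dv, fun _ => ⟨hdA, hde⟩⟩
    · exact ⟨0, 0, fun h => absurd h hw⟩
  choose df dvf hdf using hnet
  have hcover : K ⊆ ⋃ w ∈ K, Metric.ball w (η / 8) := by
    intro w hw
    exact Set.mem_biUnion hw (Metric.mem_ball_self (by linarith))
  obtain ⟨b', hb'K, hb'fin, hb'cov⟩ :=
    hK.elim_finite_subcover_image (fun w _ => Metric.isOpen_ball) hcover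
  rcases b'.eq_empty_or_nonempty with rfl | hne
  · refine ⟨1, one_pos, ?_⟩
    intro ε hε hε1 w hw
    have := hb'cov hw
    simp at this
  · set F := hb'fin.toFinset with hF
    have hFne : F.Nonempty := by
      rw [hF, Set.Finite.toFinset_nonempty]
      exact hne
    set ε₀ : ℝ := F.inf' hFne (fun w => (η / 4) / (‖dvf w‖ + 1)) with hε₀
    have hε₀pos : 0 < ε₀ := by
      rw [hε₀, Finset.lt_inf'_iff]
      intro w _
      positivity
    refine ⟨ε₀, hε₀pos, ?_⟩
    intro ε hε hεε₀ w hw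
    obtain ⟨w₀, hw₀b', hwball⟩ := Set.mem_iUnion₂.mp (hb'cov hw)
    have hw₀K : w₀ ∈ K := hb'K hw₀b'
    obtain ⟨hdA, hdd⟩ := hdf w₀ hw₀K
    set d := df w₀
    have hwd : ‖w - d‖ < η / 4 := by
      have h1 : dist w w₀ < η / 8 := Metric.mem_ball.mp hwball
      calc ‖w - d‖ = dist w d := (dist_eq_norm _ _).symm
        _ ≤ dist w w₀ + dist w₀ d := dist_triangle _ _ _
        _ < η / 8 + η / 8 := add_lt_add h1 hdd
        _ = η / 4 := by ring
    have hεdv : ε * ‖dvf w₀‖ ≤ η / 4 := by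
      have h1 : ε ≤ (η / 4) / (‖dvf w₀‖ + 1) := by
        refine le_trans hεε₀ ?_
        exact Finset.inf'_le _ (by rw [hF, Set.Finite.mem_toFinset]; exact hw₀b')
      have h2 : 0 ≤ ‖dvf w₀‖ := norm_nonneg _
      have h3 : (0:ℝ) < ‖dvf w₀‖ + 1 := by positivity
      rw [le_div_iff₀ h3] at h1
      nlinarith
    calc ‖w - Jres ε w‖
        ≤ ‖w - d‖ + ‖d - Jres ε d‖ + ‖Jres ε d - Jres ε w‖ := by
          have := norm_add₃_le (a := w - d) (b := d - Jres ε d) (c := Jres ε d - Jres ε w)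
          simpa using this
      _ ≤ ‖w - d‖ + ε * ‖dvf w₀‖ + ‖d - w‖ := by
          refine add_le_add (add_le_add le_rfl (J_dist_dom hmono hJA hdec hε hdA))
            (J_nonexpansive hmono hJA hdec hε d w)
      _ ≤ η / 4 + η / 4 + η / 4 := by
          rw [norm_sub_rev (d) w]
          exact add_le_add (add_le_add hwd.le hεdv) hwd.le
      _ ≤ η := by linarith

end Resolvent
end RSAux
namespace RSAux

lemma isRSIntegral_smul {H : Type*} [NormedAddCommGroup H] [InnerProductSpace ℝ H]
    {f g : ℝ → H} {s t I c : ℝ} (hc : 0 < c) (h : IsRSIntegral f g s t I) :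
    IsRSIntegral (fun r => c • f r) g s t (c * I) := by
  intro ε hε
  obtain ⟨δ, hδ, hp⟩ := h (ε / c) (by positivity)
  refine ⟨δ, hδ, ?_⟩
  intro n p h0 hn hm hmesh
  have := hp n p h0 hn hm hmesh
  have hsum : (∑ i ∈ Finset.range n, (inner ℝ (c • f (p i)) (g (p (i + 1)) - g (p i)) : ℝ))
      = c * ∑ i ∈ Finset.range n, (inner ℝ (f (p i)) (g (p (i + 1)) - g (p i)) : ℝ) := by
    rw [Finset.mul_sum]
    exact Finset.sum_congr rfl fun i _ => real_inner_smul_left _ _ _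
  rw [hsum, ← mul_sub, abs_mul, abs_of_pos hc]
  calc c * |(∑ i ∈ Finset.range n, (inner ℝ (f (p i)) (g (p (i + 1)) - g (p i)) : ℝ)) - I|
      < c * (ε / c) := by exact mul_lt_mul_of_pos_left this hc
    _ = ε := by field_simp

noncomputable def varfun {H : Type*} [NormedAddCommGroup H] (k : ℝ → H) (T : ℝ) : ℝ → ℝ :=
  fun ρ => (eVariationOn k (Set.Icc 0 T ∩ Set.Icc 0 ρ)).toReal

lemma varfun_mono {H : Type*} [NormedAddCommGroup H] {k : ℝ → H} {T : ℝ}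
    (hkbv : BoundedVariationOn k (Set.Icc 0 T)) : Monotone (varfun k T) := by
  intro ρ ρ' hρ
  refine ENNReal.toReal_mono (ne_top_of_le_ne_top hkbv
    (eVariationOn.mono k Set.inter_subset_left)) ?_
  exact eVariationOn.mono k (Set.inter_subset_inter_right _ (Set.Icc_subset_Icc_right hρ))

lemma varfun_incr {H : Type*} [NormedAddCommGroup H] {k : ℝ → H} {T : ℝ}
    (hkbv : BoundedVariationOn k (Set.Icc 0 T)) {r h' : ℝ}
    (h0 : 0 ≤ r) (hh : 0 ≤ h') (hT : r + h' ≤ T) :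
    (eVariationOn k (Set.Icc r (r + h'))).toReal = varfun k T (r + h') - varfun k T r := by
  have hmem : r ∈ Set.Icc 0 T := ⟨h0, by linarith⟩
  have hsub : Set.Icc r (r + h') ⊆ Set.Icc 0 T := Set.Icc_subset_Icc (by linarith) hT
  have hadd := eVariationOn.Icc_add_Icc k (s := Set.Icc 0 T) h0 (by linarith : r ≤ r + h') hmem
  have hint : Set.Icc 0 T ∩ Set.Icc r (r + h') = Set.Icc r (r + h') :=
    Set.inter_eq_self_of_subset_right hsub
  rw [hint] at hadd
  have h1 : eVariationOn k (Set.Icc 0 T ∩ Set.Icc 0 r) ≠ ⊤ :=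
    ne_top_of_le_ne_top hkbv (eVariationOn.mono k Set.inter_subset_left)
  have h2 : eVariationOn k (Set.Icc r (r + h')) ≠ ⊤ :=
    ne_top_of_le_ne_top hkbv (eVariationOn.mono k hsub)
  have h3 : eVariationOn k (Set.Icc 0 T ∩ Set.Icc 0 (r + h')) ≠ ⊤ :=
    ne_top_of_le_ne_top hkbv (eVariationOn.mono k Set.inter_subset_left)
  rw [varfun, varfun, ← hadd, ENNReal.toReal_add h1 h2]
  ring

/-- key pointwise estimate at a point with variation derivative control -/
lemma pointwise_est {H : Type*} [NormedAddCommGroup H] [InnerProductSpace ℝ H]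
    {A : Set (H × H)} {x k : ℝ → H} {T : ℝ}
    (hk' : ∀ s t : ℝ, 0 ≤ s → s ≤ t → t ≤ T → ∀ u us : ℝ → H,
      ContinuousOn u (Set.Icc s t) → ContinuousOn us (Set.Icc s t) →
      (∀ r ∈ Set.Icc s t, (u r, us r) ∈ A) →
      ∀ I : ℝ, IsRSIntegral (fun r => x r - u r) k s t I →
        0 ≤ I - ∫ r in s..t, (inner ℝ (x r - u r) (us r) : ℝ))
    (hxcont : ContinuousOn x (Set.Icc 0 T))
    (hkbv : BoundedVariationOn k (Set.Icc 0 T))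
    {r C : ℝ} (hr0 : 0 ≤ r) (hrT : r < T) (hCpos : 0 < C)
    (hC : ∃ h₁ > (0:ℝ), ∀ h', 0 < h' → h' ≤ h₁ → varfun k T (r + h') - varfun k T r ≤ C * h')
    {u₀ us₀ : H} (hu₀ : (u₀, us₀) ∈ A) :
    (inner ℝ (x r - u₀) us₀ : ℝ) ≤ C * ‖x r - u₀‖ := by
  refine le_of_forall_pos_le_add ?_
  intro γ hγ
  obtain ⟨h₁, hh₁, hCb⟩ := hC
  set η : ℝ := γ / (1 + C) with hηdef
  have hηpos : 0 < η := by positivity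
  set β : ℝ := min η (η / (‖us₀‖ + 1)) with hβdef
  have hβpos : 0 < β := lt_min hηpos (by positivity)
  have hrmem : r ∈ Set.Icc (0:ℝ) T := ⟨hr0, hrT.le⟩
  have hxc : ContinuousWithinAt x (Set.Icc 0 T) r := hxcont r hrmem
  rw [Metric.continuousWithinAt_iff] at hxc
  obtain ⟨δx, hδx, hxf⟩ := hxc β hβpos
  set h' : ℝ := min h₁ (min (δx / 2) (T - r)) with hh'def
  have hh'pos : 0 < h' := lt_min hh₁ (lt_min (by linarith) (by linarith))
  have hh'T : r + h' ≤ T := by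
    have : h' ≤ T - r := le_trans (min_le_right _ _) (min_le_right _ _)
    linarith
  have hh'δ : h' < δx := by
    have : h' ≤ δx / 2 := le_trans (min_le_right _ _) (min_le_left _ _)
    linarith
  have hsub : Set.Icc r (r + h') ⊆ Set.Icc 0 T := Set.Icc_subset_Icc hr0 hh'T
  have hxnear : ∀ ρ ∈ Set.Icc r (r + h'), ‖x ρ - x r‖ ≤ β := by
    intro ρ hρ
    have hρd : dist ρ r < δx := by
      rw [Real.dist_eq, abs_of_nonneg (by linarith [hρ.1])]
      linarith [hρ.2]
    have := hxf (hsub hρ) hρd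
    rw [dist_eq_norm] at this
    exact this.le
  -- existence of the RS integral
  obtain ⟨I₁, hI₁⟩ := exists_isRSIntegral (f := fun ρ => x ρ - u₀) (g := k)
    (by linarith : r ≤ r + h')
    ((hxcont.mono hsub).sub continuousOn_const) (hkbv.mono hsub)
  have h0k := hk' r (r + h') hr0 (by linarith) hh'T (fun _ => u₀) (fun _ => us₀)
    continuousOn_const continuousOn_const (fun _ _ => hu₀) I₁ hI₁
  -- bound on I₁
  set M : ℝ := ‖x r - u₀‖ + β with hMdef
  have hM : ∀ ρ ∈ Set.Icc r (r + h'), ‖x ρ - u₀‖ ≤ M := by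
    intro ρ hρ
    calc ‖x ρ - u₀‖ = ‖(x ρ - x r) + (x r - u₀)‖ := by abel_nf
      _ ≤ ‖x ρ - x r‖ + ‖x r - u₀‖ := norm_add_le _ _
      _ ≤ β + ‖x r - u₀‖ := add_le_add_left (hxnear ρ hρ) _
      _ = M := by rw [hMdef]; ring
  have hIb : |I₁| ≤ M * (eVariationOn k (Set.Icc r (r + h'))).toReal :=
    IsRSIntegral_bound (by linarith) hI₁ hM (hkbv.mono hsub)
  have hvar : (eVariationOn k (Set.Icc r (r + h'))).toReal ≤ C * h' := by
    rw [varfun_incr hkbv hr0 hh'pos.le hh'T]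
    exact hCb h' hh'pos (min_le_left _ _)
  -- lower bound for the integral
  set φ : ℝ → ℝ := fun ρ => (inner ℝ (x ρ - u₀) us₀ : ℝ) with hφdef
  have hφcont : ContinuousOn φ (Set.Icc r (r + h')) :=
    (((hxcont.mono hsub).sub continuousOn_const).inner continuousOn_const)
  have hφint : IntervalIntegrable φ volume r (r + h') := by
    apply ContinuousOn.intervalIntegrable
    rwa [Set.uIcc_of_le (by linarith : r ≤ r + h')]
  have hφlow : ∀ ρ ∈ Set.Icc r (r + h'), φ r - η ≤ φ ρ := by
    intro ρ hρ
    have : |φ ρ - φ r| ≤ η := by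
      have h1 : φ ρ - φ r = (inner ℝ (x ρ - x r) us₀ : ℝ) := by
        rw [hφdef]
        simp only [← inner_sub_left]
        congr 1
        abel
      rw [h1]
      calc |(inner ℝ (x ρ - x r) us₀ : ℝ)| ≤ ‖x ρ - x r‖ * ‖us₀‖ := abs_real_inner_le_norm _ _
        _ ≤ β * ‖us₀‖ := mul_le_mul_of_nonneg_right (hxnear ρ hρ) (norm_nonneg _)
        _ ≤ (η / (‖us₀‖ + 1)) * ‖us₀‖ :=
            mul_le_mul_of_nonneg_right (min_le_right _ _) (norm_nonneg _)
        _ ≤ η := by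
            rw [div_mul_eq_mul_div, div_le_iff₀ (by positivity)]
            nlinarith [norm_nonneg us₀]
    have := abs_le.mp this
    linarith [this.1]
  have hint_low : (φ r - η) * h' ≤ ∫ ρ in r..(r + h'), φ ρ := by
    have hconst : IntervalIntegrable (fun _ => φ r - η) volume r (r + h') :=
      intervalIntegrable_const
    have := intervalIntegral.integral_mono_on (by linarith : r ≤ r + h') hconst hφint hφlow
    rwa [intervalIntegral.integral_const, smul_eq_mul, show r + h' - r = h' by ring,
      mul_comm] at this
  have hIint : (∫ ρ in r..(r + h'), φ ρ) ≤ I₁ := by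
    have : (∫ ρ in r..(r + h'), (inner ℝ (x ρ - (fun _ => u₀) ρ) ((fun _ => us₀) ρ) : ℝ))
        = ∫ ρ in r..(r + h'), φ ρ := rfl
    linarith [h0k, this]
  have hfin : (φ r - η) * h' ≤ M * (C * h') := by
    calc (φ r - η) * h' ≤ ∫ ρ in r..(r + h'), φ ρ := hint_low
      _ ≤ I₁ := hIint
      _ ≤ |I₁| := le_abs_self _
      _ ≤ M * (eVariationOn k (Set.Icc r (r + h'))).toReal := hIb
      _ ≤ M * (C * h') := by
          refine mul_le_mul_of_nonneg_left hvar ?_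
          rw [hMdef]
          positivity
  have hφrM : φ r - η ≤ M * C := by
    have := (mul_le_mul_iff_of_pos_right hh'pos).mp (by linarith [hfin] : (φ r - η) * h' ≤ (M * C) * h')
    linarith
  have hβη : β ≤ η := min_le_left _ _
  have : φ r ≤ C * ‖x r - u₀‖ + η * (1 + C) := by
    rw [hMdef] at hφrM
    nlinarith
  have hηγ : η * (1 + C) = γ := by
    rw [hηdef]
    field_simp
  linarith [this, hηγ.le]

end RSAux
namespace RSAux

lemma deriv_bound {v : ℝ → ℝ} {r : ℝ} (hd : DifferentiableAt ℝ v r) :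
    ∃ h₁ > (0:ℝ), ∀ h', 0 < h' → h' ≤ h₁ → v (r + h') - v r ≤ (|deriv v r| + 1) * h' := by
  have ht := hd.hasDerivAt
  rw [hasDerivAt_iff_tendsto_slope] at ht
  have hlt : deriv v r < |deriv v r| + 1 :=
    lt_of_le_of_lt (le_abs_self _) (by linarith [abs_nonneg (deriv v r)])
  have h2 : Filter.Tendsto (slope v r) (nhdsWithin r (Set.Ioi r)) (nhds (deriv v r)) :=
    ht.mono_left (nhdsWithin_mono r (fun ρ hρ => ne_of_gt hρ))
  have hev : ∀ᶠ ρ in nhdsWithin r (Set.Ioi r), slope v r ρ < |deriv v r| + 1 :=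
    h2.eventually (gt_mem_nhds hlt)
  rw [Filter.eventually_iff] at hev
  obtain ⟨u', hu', hsub⟩ := mem_nhdsGT_iff_exists_Ioc_subset.mp hev
  refine ⟨u' - r, by simpa using hu', ?_⟩
  intro h' h'0 h'le
  have hmem : r + h' ∈ Set.Ioc r u' := ⟨by linarith, by linarith⟩
  have hs := hsub hmem
  have hsl : (v (r + h') - v r) / h' < |deriv v r| + 1 := by
    have h1 : slope v r (r + h') = (v (r + h') - v r) / h' := by
      rw [slope_def_field]
      congr 1
      ring
    have hs' : slope v r (r + h') < |deriv v r| + 1 := hs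
    rwa [h1] at hs' 
  calc v (r + h') - v r = ((v (r + h') - v r) / h') * h' := by field_simp
    _ ≤ (|deriv v r| + 1) * h' := mul_le_mul_of_nonneg_right hsl.le h'0.le

end RSAux

set_option maxHeartbeats 1000000 in
/-- Monotonicity of the realization on `C([0,T];H)` of a maximal monotone operator `A`:
if `(x,k)` and `(y,ℓ)` both satisfy `∫_s^t ⟨ · (r) − u(r), dk(r) − u*(r)dr⟩ ≥ 0` against
every continuous selection `(u,u*)` of `A`, and `A` admits continuous resolvent/Yosida
selections `J_ε, A_ε` with `z = J_ε z + ε • A_ε z`, `(J_ε z, A_ε z) ∈ A` and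
`ε • A_ε z → 0`, then `∫_s^t ⟨x(r) − y(r), dk(r) − dℓ(r)⟩ ≥ 0`. -/
theorem realization_monotone
    {H : Type*} [NormedAddCommGroup H] [InnerProductSpace ℝ H]
    (A : Set (H × H))
    (hmono : ∀ p ∈ A, ∀ q ∈ A, (0 : ℝ) ≤ inner ℝ (p.1 - q.1) (p.2 - q.2))
    (hmax : ∀ x xs : H, (∀ u ∈ A, (0 : ℝ) ≤ inner ℝ (x - u.1) (xs - u.2)) → (x, xs) ∈ A)
    (T : ℝ) (hT : 0 ≤ T)
    (x y k l : ℝ → H)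
    (hx : ContinuousOn x (Set.Icc 0 T)) (hy : ContinuousOn y (Set.Icc 0 T))
    (hkcont : ContinuousOn k (Set.Icc 0 T)) (hlcont : ContinuousOn l (Set.Icc 0 T))
    (hkbv : BoundedVariationOn k (Set.Icc 0 T))
    (hlbv : BoundedVariationOn l (Set.Icc 0 T))
    (hk : ∀ s t : ℝ, 0 ≤ s → s ≤ t → t ≤ T → ∀ u us : ℝ → H,
      ContinuousOn u (Set.Icc s t) → ContinuousOn us (Set.Icc s t) →
      (∀ r ∈ Set.Icc s t, (u r, us r) ∈ A) →
      ∀ I : ℝ, IsRSIntegral (fun r => x r - u r) k s t I →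
        0 ≤ I - ∫ r in s..t, (inner ℝ (x r - u r) (us r) : ℝ))
    (hl : ∀ s t : ℝ, 0 ≤ s → s ≤ t → t ≤ T → ∀ u us : ℝ → H,
      ContinuousOn u (Set.Icc s t) → ContinuousOn us (Set.Icc s t) →
      (∀ r ∈ Set.Icc s t, (u r, us r) ∈ A) →
      ∀ I : ℝ, IsRSIntegral (fun r => y r - u r) l s t I →
        0 ≤ I - ∫ r in s..t, (inner ℝ (y r - u r) (us r) : ℝ))
    (Jres Ayos : ℝ → H → H)
    (hsel : ∀ ε : ℝ, 0 < ε →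
      Continuous (Jres ε) ∧ Continuous (Ayos ε) ∧
      (∀ z : H, (Jres ε z, Ayos ε z) ∈ A) ∧
      (∀ z : H, z = Jres ε z + ε • Ayos ε z))
    (hyosida_small : ∀ z ∈ closure (Prod.fst '' A),
      Filter.Tendsto (fun ε : ℝ => ε • Ayos ε z)
        (nhdsWithin 0 (Set.Ioi 0)) (nhds (0 : H))) :
    ∀ s t : ℝ, 0 ≤ s → s ≤ t → t ≤ T →
      ∀ I : ℝ, IsRSIntegral (fun r => x r - y r) (fun r => k r - l r) s t I →
        0 ≤ I := by
  intro s t hs hst htT I hI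
  rcases eq_or_lt_of_le hst with rfl | hstlt
  · rw [RSAux.isRSIntegral_zero hI]
  have hJA : ∀ ε : ℝ, 0 < ε → ∀ z : H, (Jres ε z, Ayos ε z) ∈ A :=
    fun ε hε => (hsel ε hε).2.2.1
  have hdec : ∀ ε : ℝ, 0 < ε → ∀ z : H, z = Jres ε z + ε • Ayos ε z :=
    fun ε hε => (hsel ε hε).2.2.2
  set z : ℝ → H := fun ρ => (2:ℝ)⁻¹ • (x ρ + y ρ) with hzdef
  have hzcont : ContinuousOn z (Set.Icc 0 T) := (hx.add hy).const_smul _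
  have hsub : Set.Icc s t ⊆ Set.Icc 0 T := Set.Icc_subset_Icc hs htT
  -- a.e. differentiability of variation functions
  set B : Set ℝ := {ρ | DifferentiableAt ℝ (RSAux.varfun k T) ρ ∧
    DifferentiableAt ℝ (RSAux.varfun l T) ρ} with hBdef
  have hB : ∀ᵐ ρ, ρ ∈ B :=
    ((RSAux.varfun_mono hkbv).ae_differentiableAt).and
      ((RSAux.varfun_mono hlbv).ae_differentiableAt)
  set D : Set ℝ := Set.Ioo s t ∩ B with hDdef
  -- Step C: at points of D, z r is in the closure of the domain
  have hDgood : ∀ r ∈ D, z r ∈ closure (Prod.fst '' A) := by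
    rintro r ⟨hrIoo, hrB⟩
    have hr0 : 0 ≤ r := le_trans hs hrIoo.1.le
    have hrT : r < T := lt_of_lt_of_le hrIoo.2 htT
    set Ck : ℝ := |deriv (RSAux.varfun k T) r| + 1 with hCkdef
    set Cl : ℝ := |deriv (RSAux.varfun l T) r| + 1 with hCldef
    have hCkpos : 0 < Ck := by rw [hCkdef]; positivity
    have hClpos : 0 < Cl := by rw [hCldef]; positivity
    have hCk := RSAux.deriv_bound hrB.1
    have hCl := RSAux.deriv_bound hrB.2
    have keyx : ∀ u₀ us₀ : H, (u₀, us₀) ∈ A →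
        (inner ℝ (x r - u₀) us₀ : ℝ) ≤ Ck * ‖x r - u₀‖ :=
      fun u₀ us₀ h => RSAux.pointwise_est hk hx hkbv hr0 hrT hCkpos hCk h
    have keyy : ∀ u₀ us₀ : H, (u₀, us₀) ∈ A →
        (inner ℝ (y r - u₀) us₀ : ℝ) ≤ Cl * ‖y r - u₀‖ :=
      fun u₀ us₀ h => RSAux.pointwise_est hl hy hlbv hr0 hrT hClpos hCl h
    rw [Metric.mem_closure_iff]
    intro δ' hδ'
    by_contra hcon
    push_neg at hcon
    set G : ℝ := (Ck * ‖x r - z r‖ + Cl * ‖y r - z r‖) / δ' + Ck + Cl with hGdef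
    have hG0 : 0 < G := by
      have h1 : 0 ≤ (Ck * ‖x r - z r‖ + Cl * ‖y r - z r‖) / δ' :=
        div_nonneg (by nlinarith [norm_nonneg (x r - z r), norm_nonneg (y r - z r)]) hδ'.le
      rw [hGdef]; linarith
    set ε : ℝ := δ' / (G + 1) with hεdef
    have hεpos : 0 < ε := by positivity
    set Jz : H := Jres ε (z r) with hJzdef
    set Az : H := Ayos ε (z r) with hAzdef
    have hJzA : (Jz, Az) ∈ A := hJA ε hεpos (z r)
    set q : ℝ := ‖z r - Jz‖ with hqdef
    have hq : δ' ≤ q := by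
      have := hcon Jz ⟨(Jz, Az), hJzA, rfl⟩
      rwa [dist_eq_norm] at this
    have hAz : Az = ε⁻¹ • (z r - Jz) := by
      have h1 : z r = Jz + ε • Az := hdec ε hεpos (z r)
      have h2 : ε • Az = z r - Jz := by rw [h1]; abel
      rw [← h2, smul_smul, inv_mul_cancel₀ hεpos.ne', one_smul]
    have e1 : (inner ℝ (x r - Jz) Az : ℝ) ≤ Ck * ‖x r - Jz‖ := keyx Jz Az hJzA
    have e2 : (inner ℝ (y r - Jz) Az : ℝ) ≤ Cl * ‖y r - Jz‖ := keyy Jz Az hJzA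
    have hvec : (x r - Jz) + (y r - Jz) = (2:ℝ) • (z r - Jz) := by
      simp only [hzdef]
      module
    have hsumin : (inner ℝ (x r - Jz) Az : ℝ) + (inner ℝ (y r - Jz) Az : ℝ)
        = 2 * ε⁻¹ * q ^ 2 := by
      rw [← inner_add_left, hvec, hAz, real_inner_smul_left, real_inner_smul_right,
        real_inner_self_eq_norm_sq, ← hqdef]
      ring
    have htri1 : ‖x r - Jz‖ ≤ ‖x r - z r‖ + q := by
      rw [hqdef]
      calc ‖x r - Jz‖ = ‖(x r - z r) + (z r - Jz)‖ := by abel_nf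
        _ ≤ ‖x r - z r‖ + ‖z r - Jz‖ := norm_add_le _ _
    have htri2 : ‖y r - Jz‖ ≤ ‖y r - z r‖ + q := by
      rw [hqdef]
      calc ‖y r - Jz‖ = ‖(y r - z r) + (z r - Jz)‖ := by abel_nf
        _ ≤ ‖y r - z r‖ + ‖z r - Jz‖ := norm_add_le _ _
    have hmain : 2 * ε⁻¹ * q ^ 2 ≤ G * q := by
      have h1 : 2 * ε⁻¹ * q ^ 2 ≤ Ck * (‖x r - z r‖ + q) + Cl * (‖y r - z r‖ + q) := by
        rw [← hsumin]
        refine add_le_add (le_trans e1 (mul_le_mul_of_nonneg_left htri1 hCkpos.le))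
          (le_trans e2 (mul_le_mul_of_nonneg_left htri2 hClpos.le))
      have h2 : Ck * ‖x r - z r‖ + Cl * ‖y r - z r‖
          ≤ ((Ck * ‖x r - z r‖ + Cl * ‖y r - z r‖) / δ') * q := by
        have hnum : 0 ≤ Ck * ‖x r - z r‖ + Cl * ‖y r - z r‖ := by positivity
        rw [div_mul_eq_mul_div, le_div_iff₀ hδ']
        nlinarith
      rw [hGdef]
      have h3 : Ck * (‖x r - z r‖ + q) + Cl * (‖y r - z r‖ + q)
          ≤ ((Ck * ‖x r - z r‖ + Cl * ‖y r - z r‖) / δ') * q + Ck * q + Cl * q := by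
        nlinarith [h2]
      have h4 : ((Ck * ‖x r - z r‖ + Cl * ‖y r - z r‖) / δ' + Ck + Cl) * q
          = ((Ck * ‖x r - z r‖ + Cl * ‖y r - z r‖) / δ') * q + Ck * q + Cl * q := by ring
      linarith
    have hq2 : 2 * q ≤ ε * G := by
      have h3 : ε * (2 * ε⁻¹ * q ^ 2) ≤ ε * (G * q) := mul_le_mul_of_nonneg_left hmain hεpos.le
      have h4 : ε * (2 * ε⁻¹ * q ^ 2) = 2 * q ^ 2 := by field_simp
      rw [h4] at h3
      nlinarith [hq, hδ']
    rw [hεdef] at hq2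
    have : δ' / (G + 1) * G < 2 * δ' := by
      rw [div_mul_eq_mul_div, div_lt_iff₀ (by linarith)]
      nlinarith
    linarith
  -- density: all r in [s,t] are good
  have hgood : ∀ r ∈ Set.Icc s t, z r ∈ closure (Prod.fst '' A) := by
    intro r hrIcc
    have hrcl : r ∈ closure D := by
      rw [Metric.mem_closure_iff]
      intro δ' hδ'
      set a' : ℝ := max s (r - δ' / 2) with ha'
      set b' : ℝ := min t (r + δ' / 2) with hb'
      have hab' : a' < b' := by
        rw [ha', hb', max_lt_iff, lt_min_iff, lt_min_iff]
        refine ⟨⟨hstlt, by linarith [hrIcc.1]⟩, ⟨by linarith [hrIcc.2], by linarith⟩⟩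
      have hOne : (Set.Ioo a' b').Nonempty := Set.nonempty_Ioo.mpr hab'
      have hpos : 0 < volume (Set.Ioo a' b') := isOpen_Ioo.measure_pos volume hOne
      have hnon : ((Set.Ioo a' b') ∩ B).Nonempty := by
        by_contra hemp
        rw [Set.not_nonempty_iff_eq_empty] at hemp
        have hsub' : Set.Ioo a' b' ⊆ {ρ | ρ ∉ B} := by
          intro ρ hρ
          intro hρB
          exact Set.eq_empty_iff_forall_notMem.mp hemp ρ ⟨hρ, hρB⟩
        have h0 : volume {ρ | ρ ∉ B} = 0 := by
          have hB' := hB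
          rwa [MeasureTheory.ae_iff] at hB' 
        have : volume (Set.Ioo a' b') ≤ volume {ρ | ρ ∉ B} := MeasureTheory.measure_mono hsub'
        rw [h0] at this
        exact absurd (le_antisymm this zero_le) (ne_of_gt hpos)
      obtain ⟨ρ, hρO, hρB⟩ := hnon
      refine ⟨ρ, ⟨⟨?_, ?_⟩, hρB⟩, ?_⟩
      · exact lt_of_le_of_lt (le_max_left _ _) hρO.1
      · exact lt_of_lt_of_le hρO.2 (min_le_left _ _)
      · rw [Real.dist_eq, abs_lt]
        have h1 : a' ≥ r - δ' / 2 := le_max_right _ _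
        have h2 : b' ≤ r + δ' / 2 := min_le_right _ _
        constructor <;> [linarith [hρO.2]; linarith [hρO.1]]
    obtain ⟨w, hwD, hwlim⟩ := mem_closure_iff_seq_limit.mp hrcl
    have hwlim' : Filter.Tendsto (fun n => z (w n)) Filter.atTop (nhds (z r)) := by
      have hzc : ContinuousWithinAt z (Set.Icc 0 T) r := hzcont r (hsub hrIcc)
      refine hzc.tendsto.comp ?_
      refine tendsto_nhdsWithin_of_tendsto_nhds_of_eventually_within w hwlim ?_
      refine Filter.Eventually.of_forall fun n => ?_
      exact hsub (Set.Ioo_subset_Icc_self (hwD n).1)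
    exact isClosed_closure.mem_of_tendsto hwlim'
      (Filter.Eventually.of_forall fun n => hDgood (w n) (hwD n))
  -- compact image
  set K : Set H := z '' Set.Icc s t with hKdef
  have hKcomp : IsCompact K := isCompact_Icc.image_of_continuousOn (hzcont.mono hsub)
  have hKcl : K ⊆ closure (Prod.fst '' A) := by
    rintro w ⟨ρ, hρ, rfl⟩
    exact hgood ρ hρ
  -- final estimate
  refine le_of_forall_pos_le_add ?_
  intro η' hη'
  set V' : ℝ := (eVariationOn (fun ρ => k ρ + l ρ) (Set.Icc s t)).toReal with hV'def
  have hV'0 : 0 ≤ V' := ENNReal.toReal_nonneg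
  set η : ℝ := η' / (2 * (V' + 1)) with hηdef
  have hηpos : 0 < η := by positivity
  obtain ⟨ε₀, hε₀pos, hε₀⟩ := RSAux.uniform_small hmono hJA hdec hKcomp hKcl hηpos
  obtain ⟨hJcont, hAcont, hJA', hdec'⟩ := hsel ε₀ hε₀pos
  set u : ℝ → H := fun ρ => Jres ε₀ (z ρ) with hudef
  set us : ℝ → H := fun ρ => Ayos ε₀ (z ρ) with husdef
  have hucont : ContinuousOn u (Set.Icc s t) :=
    hJcont.comp_continuousOn (hzcont.mono hsub)
  have huscont : ContinuousOn us (Set.Icc s t) :=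
    hAcont.comp_continuousOn (hzcont.mono hsub)
  have husmem : ∀ ρ ∈ Set.Icc s t, (u ρ, us ρ) ∈ A := fun ρ _ => hJA' (z ρ)
  have hklbv : BoundedVariationOn (fun ρ => k ρ + l ρ) (Set.Icc s t) :=
    RSAux.boundedVariationOn_add (hkbv.mono hsub) (hlbv.mono hsub)
  obtain ⟨I₁, hI₁⟩ := RSAux.exists_isRSIntegral hst ((hx.mono hsub).sub hucont) (hkbv.mono hsub)
  obtain ⟨J, hJ⟩ := RSAux.exists_isRSIntegral hst huscont hklbv
  have h1 : IsRSIntegral (fun ρ => (2:ℝ)⁻¹ • (x ρ - y ρ)) (fun ρ => k ρ - l ρ) s t ((2:ℝ)⁻¹ * I) :=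
    RSAux.isRSIntegral_smul (by norm_num) hI
  have h3 : IsRSIntegral (fun ρ => ε₀ • us ρ) (fun ρ => k ρ + l ρ) s t (ε₀ * J) :=
    RSAux.isRSIntegral_smul hε₀pos hJ
  have hpt : ∀ a b : ℝ, (inner ℝ (y a - u a) (l b - l a) : ℝ)
      = (inner ℝ ((2:ℝ)⁻¹ • (x a - y a)) ((k b - l b) - (k a - l a)) : ℝ)
        + (inner ℝ (ε₀ • us a) ((k b + l b) - (k a + l a)) : ℝ)
        - (inner ℝ (x a - u a) (k b - k a) : ℝ) := by
    intro a b
    have hua : u a = (2:ℝ)⁻¹ • (x a + y a) - ε₀ • us a := by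
      have hz : (2:ℝ)⁻¹ • (x a + y a) = u a + ε₀ • us a := hdec' (z a)
      rw [hz]; abel
    rw [hua]
    simp only [inner_sub_left, inner_sub_right, inner_add_left, inner_add_right,
      real_inner_smul_left, smul_add, smul_sub]
    ring
  have hI₂ : IsRSIntegral (fun ρ => y ρ - u ρ) l s t ((2:ℝ)⁻¹ * I + ε₀ * J - I₁) :=
    RSAux.isRSIntegral_combo h1 h3 hI₁ hpt
  have h0x := hk s t hs hst htT u us hucont huscont husmem I₁ hI₁
  have h0y := hl s t hs hst htT u us hucont huscont husmem _ hI₂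
  have hintx : IntervalIntegrable (fun ρ => (inner ℝ (x ρ - u ρ) (us ρ) : ℝ)) volume s t := by
    apply ContinuousOn.intervalIntegrable
    rw [Set.uIcc_of_le hst]
    exact ((hx.mono hsub).sub hucont).inner huscont
  have hinty : IntervalIntegrable (fun ρ => (inner ℝ (y ρ - u ρ) (us ρ) : ℝ)) volume s t := by
    apply ContinuousOn.intervalIntegrable
    rw [Set.uIcc_of_le hst]
    exact ((hy.mono hsub).sub hucont).inner huscont
  have hptsum : ∀ ρ ∈ Set.Icc s t,
      (0:ℝ) ≤ (inner ℝ (x ρ - u ρ) (us ρ) : ℝ) + (inner ℝ (y ρ - u ρ) (us ρ) : ℝ) := by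
    intro ρ _
    have hvec : (x ρ - u ρ) + (y ρ - u ρ) = (2 * ε₀) • us ρ := by
      have hz : (2:ℝ)⁻¹ • (x ρ + y ρ) = u ρ + ε₀ • us ρ := hdec' (z ρ)
      have : u ρ = (2:ℝ)⁻¹ • (x ρ + y ρ) - ε₀ • us ρ := by rw [hz]; abel
      rw [this]
      module
    rw [← inner_add_left, hvec, real_inner_smul_left, real_inner_self_eq_norm_sq]
    positivity
  have hintsum : (0:ℝ) ≤ (∫ ρ in s..t, (inner ℝ (x ρ - u ρ) (us ρ) : ℝ))
      + ∫ ρ in s..t, (inner ℝ (y ρ - u ρ) (us ρ) : ℝ) := by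
    rw [← intervalIntegral.integral_add hintx hinty]
    exact intervalIntegral.integral_nonneg hst hptsum
  have hI₁I₂ : 0 ≤ I₁ + ((2:ℝ)⁻¹ * I + ε₀ * J - I₁) := by linarith
  -- bound on J
  have husb : ∀ ρ ∈ Set.Icc s t, ‖us ρ‖ ≤ η / ε₀ := by
    intro ρ hρ
    have hzρ : z ρ ∈ K := ⟨ρ, hρ, rfl⟩
    have hsmall : ‖z ρ - Jres ε₀ (z ρ)‖ ≤ η := hε₀ ε₀ hε₀pos le_rfl (z ρ) hzρ
    have heq : ε₀ • us ρ = z ρ - Jres ε₀ (z ρ) := by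
      rw [eq_sub_iff_add_eq, add_comm]
      exact (hdec' (z ρ)).symm
    have : ε₀ * ‖us ρ‖ ≤ η := by
      rw [← abs_of_pos hε₀pos, ← Real.norm_eq_abs, ← norm_smul, heq]
      exact hsmall
    rw [le_div_iff₀ hε₀pos]
    linarith
  have hJb : |J| ≤ (η / ε₀) * V' :=
    RSAux.IsRSIntegral_bound hst hJ husb hklbv
  have hεJ : ε₀ * J ≤ η * V' := by
    have h1 : ε₀ * |J| ≤ ε₀ * ((η / ε₀) * V') := mul_le_mul_of_nonneg_left hJb hε₀pos.le
    have h2 : ε₀ * ((η / ε₀) * V') = η * V' := by field_simp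
    have h3 : ε₀ * J ≤ ε₀ * |J| := mul_le_mul_of_nonneg_left (le_abs_self J) hε₀pos.le
    linarith
  have hfinal : 0 ≤ (2:ℝ)⁻¹ * I + η * V' := by linarith
  have hηV : 2 * (η * V') ≤ η' := by
    rw [hηdef]
    rw [div_mul_eq_mul_div, mul_comm]
    rw [div_mul_eq_mul_div, div_le_iff₀ (by positivity)]
    nlinarith
  linarith
end

section
/- Let φ : ℝ^d → ℝ ∪ {+∞} be proper convex l.s.c., let x ∈ C([0,T]; ℝ^d) and k ∈ BV([0,T]; ℝ^d) with k(0)=0, and suppose t ↦ φ(x(t)) ∈ L¹(0,T). Then the following are equivalent: (a) for every continuous y : [0,T] → ℝ^d and all 0 ≤ s ≤ t ≤ T, ∫_s^t ⟨y(r) − x(r), dk(r)⟩ + ∫_s^t φ(x(r)) dr ≤ ∫_s^t φ(y(r)) dr; (b) for every z ∈ ℝ^d and all 0 ≤ s ≤ t ≤ T, ∫_s^t ⟨z − x(r), dk(r)⟩ + ∫_s^t φ(x(r)) dr ≤ (t − s) φ(z). -/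
open MeasureTheory Classical

/-- The integral `∫_s^t f(r) dr` of an `ℝ ∪ {+∞}`-valued function, equal to `+∞`
whenever `f` is not finite and integrable on `[s,t]`. -/

noncomputable def ERealIntegral (f : ℝ → EReal) (s t : ℝ) : EReal :=
  if (∀ r ∈ Set.Icc s t, f r ≠ ⊤) ∧ IntegrableOn (fun r => (f r).toReal) (Set.Icc s t)
  then (((∫ r in s..t, (f r).toReal) : ℝ) : EReal) else ⊤

section RSLemmas

variable {H : Type*} [NormedAddCommGroup H] [InnerProductSpace ℝ H]

/-- The Riemann–Stieltjes sum. -/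
noncomputable def RSsum (f k : ℝ → H) (p : ℕ → ℝ) (n : ℕ) : ℝ :=
  ∑ i ∈ Finset.range n, (inner ℝ (f (p i)) (k (p (i + 1)) - k (p i)) : ℝ)

lemma isRSIntegral_iff (f k : ℝ → H) (s t : ℝ) (I : ℝ) :
    IsRSIntegral f k s t I ↔ ∀ ε > (0 : ℝ), ∃ δ > (0 : ℝ), ∀ n : ℕ, ∀ p : ℕ → ℝ,
      p 0 = s → p n = t → (∀ i < n, p i ≤ p (i + 1)) → (∀ i < n, p (i + 1) - p i < δ) →
      |RSsum f k p n - I| < ε := Iff.rfl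

/-- Chain a step-monotonicity hypothesis. -/
lemma part_chain {α : Type*} [Preorder α] {p : ℕ → α} {n : ℕ}
    (hm : ∀ i < n, p i ≤ p (i + 1)) : ∀ j ≤ n, ∀ i ≤ j, p i ≤ p j := by
  intro j
  induction j with
  | zero => intro _ i hi; simp [Nat.le_zero.mp hi]
  | succ j ih =>
    intro hjn i hij
    rcases Nat.lt_or_ge i (j + 1) with h | h
    · exact (ih (le_trans (Nat.le_succ j) hjn) i (Nat.lt_succ_iff.mp h)).trans
        (hm j (Nat.lt_of_succ_le hjn))
    · have : i = j + 1 := le_antisymm hij h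
      simp [this]

lemma part_mem {p : ℕ → ℝ} {n : ℕ} {a b : ℝ} (hp0 : p 0 = a) (hpn : p n = b)
    (hm : ∀ i < n, p i ≤ p (i + 1)) : ∀ i ≤ n, p i ∈ Set.Icc a b := by
  intro i hi
  constructor
  · rw [← hp0]; exact part_chain hm i hi 0 (Nat.zero_le _)
  · rw [← hpn]; exact part_chain hm n le_rfl i hi

/-- Sum of norms of increments of `k` along a monotone family in `s` is bounded
by the total variation. -/
lemma sum_norm_le_var (k : ℝ → H) {s : Set ℝ} (hkbv : BoundedVariationOn k s)
    {N : ℕ} {r : ℕ → ℝ} (hrm : ∀ l < N, r l ≤ r (l + 1)) (hmem : ∀ l ≤ N, r l ∈ s) :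
    ∑ l ∈ Finset.range N, ‖k (r (l + 1)) - k (r l)‖ ≤ (eVariationOn k s).toReal := by
  have hmono : MonotoneOn r (Set.Iic N) := by
    intro i hi j hj hij
    exact part_chain hrm j hj i hij
  have h1 := eVariationOn.sum_le_of_monotoneOn_Iic (f := k) hmono hmem
  have hfin : (∑ l ∈ Finset.range N, edist (k (r (l + 1))) (k (r l))) ≠ ⊤ :=
    ne_top_of_le_ne_top hkbv h1
  have heq : ∀ l : ℕ, ‖k (r (l + 1)) - k (r l)‖ = (edist (k (r (l + 1))) (k (r l))).toReal := by
    intro l; rw [← dist_eq_norm, dist_edist]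
  calc ∑ l ∈ Finset.range N, ‖k (r (l + 1)) - k (r l)‖
      = (∑ l ∈ Finset.range N, edist (k (r (l + 1))) (k (r l))).toReal := by
        rw [ENNReal.toReal_sum (fun l _ => edist_ne_top _ _)]
        exact Finset.sum_congr rfl (fun l _ => heq l)
    _ ≤ (eVariationOn k s).toReal := (ENNReal.toReal_le_toReal hfin hkbv).2 h1

lemma sum_grouped {M : Type*} [AddCommMonoid M] (h : ℕ → M) (σ : ℕ → ℕ) :
    ∀ n, (∀ i < n, σ i ≤ σ (i + 1)) →
      ∑ i ∈ Finset.range n, (∑ l ∈ Finset.Ico (σ i) (σ (i + 1)), h l)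
        = ∑ l ∈ Finset.Ico (σ 0) (σ n), h l := by
  intro n
  induction n with
  | zero => simp
  | succ n ih =>
    intro hm
    rw [Finset.sum_range_succ, ih (fun i hi => hm i (hi.trans (Nat.lt_succ_self n)))]
    exact Finset.sum_Ico_consecutive _ (part_chain hm n (Nat.le_succ n) 0 (Nat.zero_le _))
      (hm n (Nat.lt_succ_self n))

/-- Key refinement estimate: if `r` refines `p` then the Riemann–Stieltjes sums
differ by at most `ω` times the sum of increments of `k` along `r`. -/
lemma refine_diff_le (f k : ℝ → H) {a b δ ω : ℝ} (hω : 0 ≤ ω)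
    {n : ℕ} {p : ℕ → ℝ} (hp0 : p 0 = a) (hpn : p n = b)
    (hpm : ∀ i < n, p i ≤ p (i + 1)) (hpδ : ∀ i < n, p (i + 1) - p i < δ)
    {N : ℕ} {r : ℕ → ℝ} (hr0 : r 0 = a) (hrN : r N = b)
    (hrm : ∀ l < N, r l ≤ r (l + 1))
    (href : ∀ i ≤ n, ∃ l, l ≤ N ∧ r l = p i)
    (hfω : ∀ u ∈ Set.Icc a b, ∀ v ∈ Set.Icc a b, |u - v| < δ → ‖f u - f v‖ ≤ ω) :
    |RSsum f k p n - RSsum f k r N|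
      ≤ ω * ∑ l ∈ Finset.range N, ‖k (r (l + 1)) - k (r l)‖ := by
  classical
  have hex : ∀ i : ℕ, ∃ l, l ≤ N ∧ (i ≤ n → r l = p i) := by
    intro i
    by_cases hi : i ≤ n
    · obtain ⟨l, hl, hrl⟩ := href i hi
      exact ⟨l, hl, fun _ => hrl⟩
    · exact ⟨0, Nat.zero_le _, fun h => absurd h hi⟩
  set σ : ℕ → ℕ := fun i => Nat.find (hex i) with hσdef
  have hσspec : ∀ i ≤ n, σ i ≤ N ∧ r (σ i) = p i := by
    intro i hi
    have := Nat.find_spec (hex i)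
    exact ⟨this.1, this.2 hi⟩
  have hσ0 : σ 0 = 0 := by
    rw [hσdef]
    rw [Nat.find_eq_zero]
    exact ⟨Nat.zero_le _, fun _ => by rw [hr0, hp0]⟩
  have hσmono : ∀ i < n, σ i ≤ σ (i + 1) := by
    intro i hi
    by_contra hcon
    push_neg at hcon
    have h1 := hσspec i hi.le
    have h2 := hσspec (i + 1) (Nat.succ_le_of_lt hi)
    have hle : r (σ (i + 1)) ≤ r (σ i) :=
      part_chain hrm (σ i) h1.1 (σ (i + 1)) hcon.le
    have hpe : p (i + 1) = p i := le_antisymm (by rw [← h1.2, ← h2.2]; exact hle) (hpm i hi)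
    have : σ i ≤ σ (i + 1) := by
      apply Nat.find_min' (hex i)
      exact ⟨h2.1, fun _ => by rw [h2.2, hpe]⟩
    omega
  -- telescope
  have htel : ∀ i < n, k (p (i + 1)) - k (p i)
      = ∑ l ∈ Finset.Ico (σ i) (σ (i + 1)), (k (r (l + 1)) - k (r l)) := by
    intro i hi
    rw [Finset.sum_Ico_eq_sub _ (hσmono i hi), Finset.sum_range_sub (fun l => k (r l)),
      Finset.sum_range_sub (fun l => k (r l))]
    rw [(hσspec i hi.le).2, (hσspec (i + 1) (Nat.succ_le_of_lt hi)).2]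
    abel
  have hσn : σ n ≤ N := (hσspec n le_rfl).1
  -- rewrite RSsum over r
  have hrsum : RSsum f k r N
      = ∑ i ∈ Finset.range n, ∑ l ∈ Finset.Ico (σ i) (σ (i + 1)),
          (inner ℝ (f (r l)) (k (r (l + 1)) - k (r l)) : ℝ) := by
    rw [sum_grouped _ _ n hσmono, hσ0]
    have hsplit : RSsum f k r N
        = (∑ l ∈ Finset.Ico 0 (σ n), (inner ℝ (f (r l)) (k (r (l + 1)) - k (r l)) : ℝ))
          + ∑ l ∈ Finset.Ico (σ n) N, (inner ℝ (f (r l)) (k (r (l + 1)) - k (r l)) : ℝ) := by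
      rw [Finset.sum_Ico_consecutive _ (Nat.zero_le _) hσn]
      rw [RSsum, Finset.range_eq_Ico]
    have htail : ∑ l ∈ Finset.Ico (σ n) N, (inner ℝ (f (r l)) (k (r (l + 1)) - k (r l)) : ℝ)
        = 0 := by
      apply Finset.sum_eq_zero
      intro l hl
      rw [Finset.mem_Ico] at hl
      have hσnb : r (σ n) = b := by rw [(hσspec n le_rfl).2, hpn]
      have hb1 : r l = b := by
        refine le_antisymm ?_ ?_
        · rw [← hrN]; exact part_chain hrm N le_rfl l hl.2.le
        · rw [← hσnb]
          exact part_chain hrm l hl.2.le (σ n) hl.1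
      have hb2 : r (l + 1) = b := by
        refine le_antisymm ?_ ?_
        · rw [← hrN]; exact part_chain hrm N le_rfl (l + 1) hl.2
        · rw [← hb1]; exact hrm l hl.2
      rw [hb1, hb2, sub_self, inner_zero_right]
    rw [hsplit, htail, add_zero]
  -- rewrite RSsum over p
  have hpsum : RSsum f k p n
      = ∑ i ∈ Finset.range n, ∑ l ∈ Finset.Ico (σ i) (σ (i + 1)),
          (inner ℝ (f (p i)) (k (r (l + 1)) - k (r l)) : ℝ) := by
    apply Finset.sum_congr rfl
    intro i hi
    rw [Finset.mem_range] at hi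
    rw [htel i hi, inner_sum]
  rw [hpsum, hrsum, ← Finset.sum_sub_distrib]
  have : ∀ i ∈ Finset.range n,
      (∑ l ∈ Finset.Ico (σ i) (σ (i + 1)), (inner ℝ (f (p i)) (k (r (l + 1)) - k (r l)) : ℝ))
        - ∑ l ∈ Finset.Ico (σ i) (σ (i + 1)), (inner ℝ (f (r l)) (k (r (l + 1)) - k (r l)) : ℝ)
      = ∑ l ∈ Finset.Ico (σ i) (σ (i + 1)),
          (inner ℝ (f (p i) - f (r l)) (k (r (l + 1)) - k (r l)) : ℝ) := by
    intro i _
    rw [← Finset.sum_sub_distrib]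
    exact Finset.sum_congr rfl (fun l _ => (inner_sub_left _ _ _).symm)
  rw [Finset.sum_congr rfl this]
  calc |∑ i ∈ Finset.range n, ∑ l ∈ Finset.Ico (σ i) (σ (i + 1)),
          (inner ℝ (f (p i) - f (r l)) (k (r (l + 1)) - k (r l)) : ℝ)|
      ≤ ∑ i ∈ Finset.range n, |∑ l ∈ Finset.Ico (σ i) (σ (i + 1)),
          (inner ℝ (f (p i) - f (r l)) (k (r (l + 1)) - k (r l)) : ℝ)| :=
        Finset.abs_sum_le_sum_abs _ _
    _ ≤ ∑ i ∈ Finset.range n, ∑ l ∈ Finset.Ico (σ i) (σ (i + 1)),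
          |(inner ℝ (f (p i) - f (r l)) (k (r (l + 1)) - k (r l)) : ℝ)| :=
        Finset.sum_le_sum (fun i _ => Finset.abs_sum_le_sum_abs _ _)
    _ ≤ ∑ i ∈ Finset.range n, ∑ l ∈ Finset.Ico (σ i) (σ (i + 1)),
          ω * ‖k (r (l + 1)) - k (r l)‖ := by
        apply Finset.sum_le_sum
        intro i hi
        rw [Finset.mem_range] at hi
        apply Finset.sum_le_sum
        intro l hl
        rw [Finset.mem_Ico] at hl
        have hlN : l ≤ N := le_trans hl.2.le (hσspec (i + 1) (Nat.succ_le_of_lt hi)).1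
        have hrl1 : p i ≤ r l := by
          rw [← (hσspec i hi.le).2]
          exact part_chain hrm l hlN (σ i) hl.1
        have hrl2 : r l ≤ p (i + 1) := by
          rw [← (hσspec (i + 1) (Nat.succ_le_of_lt hi)).2]
          exact part_chain hrm (σ (i + 1)) (hσspec (i + 1) (Nat.succ_le_of_lt hi)).1 l hl.2.le
        have hdist : |p i - r l| < δ := by
          rw [abs_sub_comm, abs_of_nonneg (by linarith)]
          have := hpδ i hi
          linarith
        have hbound : ‖f (p i) - f (r l)‖ ≤ ω :=
          hfω _ (part_mem hp0 hpn hpm i hi.le) _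
            ⟨le_trans (part_mem hp0 hpn hpm i hi.le).1 hrl1,
             le_trans hrl2 (part_mem hp0 hpn hpm (i + 1) (Nat.succ_le_of_lt hi)).2⟩ hdist
        calc |(inner ℝ (f (p i) - f (r l)) (k (r (l + 1)) - k (r l)) : ℝ)|
            ≤ ‖f (p i) - f (r l)‖ * ‖k (r (l + 1)) - k (r l)‖ := abs_real_inner_le_norm _ _
          _ ≤ ω * ‖k (r (l + 1)) - k (r l)‖ :=
              mul_le_mul_of_nonneg_right hbound (norm_nonneg _)
    _ = ∑ l ∈ Finset.Ico (σ 0) (σ n), ω * ‖k (r (l + 1)) - k (r l)‖ :=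
        sum_grouped _ _ n hσmono
    _ ≤ ∑ l ∈ Finset.range N, ω * ‖k (r (l + 1)) - k (r l)‖ := by
        apply Finset.sum_le_sum_of_subset_of_nonneg
        · rw [hσ0, Finset.range_eq_Ico]
          exact Finset.Ico_subset_Ico le_rfl hσn
        · intro l _ _
          exact mul_nonneg hω (norm_nonneg _)
    _ = ω * ∑ l ∈ Finset.range N, ‖k (r (l + 1)) - k (r l)‖ := by rw [Finset.mul_sum]

/-- Common refinement of two partitions of `[a,b]`, obtained by sorting. -/
lemma exists_common_refinement {a b : ℝ} {n m : ℕ} {p q : ℕ → ℝ}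
    (hp0 : p 0 = a) (hpn : p n = b) (hpm : ∀ i < n, p i ≤ p (i + 1))
    (hq0 : q 0 = a) (hqm : q m = b) (hqs : ∀ i < m, q i ≤ q (i + 1)) :
    ∃ r : ℕ → ℝ, r 0 = a ∧ r (n + m + 1) = b ∧ (∀ l < n + m + 1, r l ≤ r (l + 1)) ∧
      (∀ i ≤ n, ∃ l, l ≤ n + m + 1 ∧ r l = p i) ∧
      (∀ j ≤ m, ∃ l, l ≤ n + m + 1 ∧ r l = q j) := by
  classical
  set L : List ℝ := ((List.range (n + 1)).map p) ++ ((List.range (m + 1)).map q) with hL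
  set M : List ℝ := Multiset.sort (↑L : Multiset ℝ) (· ≤ ·) with hM
  have hlen : M.length = n + m + 2 := by
    rw [hM, Multiset.length_sort]
    simp [hL]
    omega
  have hsorted : M.Pairwise (· ≤ ·) := Multiset.pairwise_sort (s := (↑L : Multiset ℝ)) (r := (· ≤ ·))
  have hmem : ∀ v : ℝ, v ∈ M ↔ v ∈ L := fun v => Multiset.mem_sort _
  have hmemab : ∀ v ∈ L, v ∈ Set.Icc a b := by
    intro v hv
    rw [hL, List.mem_append] at hv
    rcases hv with hv | hv
    · rw [List.mem_map] at hv
      obtain ⟨i, hi, rfl⟩ := hv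
      rw [List.mem_range] at hi
      exact part_mem hp0 hpn hpm i (Nat.lt_succ_iff.mp hi)
    · rw [List.mem_map] at hv
      obtain ⟨i, hi, rfl⟩ := hv
      rw [List.mem_range] at hi
      exact part_mem hq0 hqm hqs i (Nat.lt_succ_iff.mp hi)
  set r : ℕ → ℝ := fun l => if h : l < M.length then M.get ⟨l, h⟩ else b with hr
  have hget_mem : ∀ (h : ℕ) (hh : h < M.length), M.get ⟨h, hh⟩ ∈ Set.Icc a b := by
    intro h hh
    exact hmemab _ ((hmem _).1 (List.get_mem M ⟨h, hh⟩))
  have hsort_le : ∀ (i j : ℕ) (hi : i < M.length) (hj : j < M.length), i ≤ j →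
      M.get ⟨i, hi⟩ ≤ M.get ⟨j, hj⟩ := by
    intro i j hi hj hij
    exact hsorted.rel_get_of_le (by exact hij)
  have hfind : ∀ v ∈ L, ∃ l, l ≤ n + m + 1 ∧ r l = v := by
    intro v hv
    have : v ∈ M := (hmem v).2 hv
    obtain ⟨⟨l, hl⟩, hlv⟩ := List.mem_iff_get.1 this
    refine ⟨l, by omega, ?_⟩
    rw [hr]
    simp only [dif_pos hl]
    exact hlv
  have hpinL : ∀ i ≤ n, p i ∈ L := by
    intro i hi
    rw [hL, List.mem_append]
    exact Or.inl (List.mem_map.2 ⟨i, List.mem_range.2 (Nat.lt_succ_of_le hi), rfl⟩)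
  have hqinL : ∀ j ≤ m, q j ∈ L := by
    intro j hj
    rw [hL, List.mem_append]
    exact Or.inr (List.mem_map.2 ⟨j, List.mem_range.2 (Nat.lt_succ_of_le hj), rfl⟩)
  have h0len : 0 < M.length := by omega
  have hlastlen : n + m + 1 < M.length := by omega
  refine ⟨r, ?_, ?_, ?_, ?_, ?_⟩
  · -- r 0 = a
    rw [hr]
    simp only [dif_pos h0len]
    obtain ⟨l, hl, hrl⟩ := hfind a (hp0 ▸ hpinL 0 (Nat.zero_le _))
    rw [hr] at hrl
    simp only [dif_pos (show l < M.length by omega)] at hrl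
    refine le_antisymm ?_ (hget_mem 0 h0len).1
    rw [← hrl]
    exact hsort_le 0 l h0len (by omega) (Nat.zero_le _)
  · -- r last = b
    rw [hr]
    simp only [dif_pos hlastlen]
    obtain ⟨l, hl, hrl⟩ := hfind b (hpn ▸ hpinL n le_rfl)
    rw [hr] at hrl
    simp only [dif_pos (show l < M.length by omega)] at hrl
    refine le_antisymm (hget_mem _ hlastlen).2 ?_
    rw [← hrl]
    exact hsort_le l (n + m + 1) (by omega) hlastlen (by omega)
  · -- monotone steps
    intro l hl
    rw [hr]
    simp only [dif_pos (show l < M.length by omega), dif_pos (show l + 1 < M.length by omega)]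
    exact hsort_le l (l + 1) _ _ (Nat.le_succ l)
  · intro i hi; exact hfind _ (hpinL i hi)
  · intro j hj; exact hfind _ (hqinL j hj)

/-- A uniform partition of mesh `< δ` exists. -/
lemma exists_fine_partition {a b δ : ℝ} (hab : a ≤ b) (hδ : 0 < δ) :
    ∃ (n : ℕ) (p : ℕ → ℝ), p 0 = a ∧ p n = b ∧ (∀ i < n, p i ≤ p (i + 1)) ∧
      (∀ i < n, p (i + 1) - p i < δ) := by
  obtain ⟨m, hm⟩ := exists_nat_gt ((b - a) / δ)
  refine ⟨m + 1, fun i => a + i * ((b - a) / (m + 1)), by simp, ?_, ?_, ?_⟩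
  · have hne : ((m : ℝ) + 1) ≠ 0 := by positivity
    push_cast
    field_simp
    ring
  · intro i _
    have h1 : (0 : ℝ) ≤ (b - a) / (m + 1) := div_nonneg (sub_nonneg.2 hab) (by positivity)
    have : ((i : ℝ) + 1) * ((b - a) / (m + 1)) - i * ((b - a) / (m + 1)) = (b - a) / (m + 1) := by
      ring
    push_cast
    nlinarith
  · intro i _
    have hstep : (a + ((i : ℝ) + 1) * ((b - a) / (m + 1))) - (a + i * ((b - a) / (m + 1)))
        = (b - a) / (m + 1) := by ring
    push_cast
    rw [hstep]
    rw [div_lt_iff₀ (by positivity)]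
    have h1 : b - a < δ * m := by
      rw [div_lt_iff₀ hδ] at hm
      linarith [mul_comm δ (m : ℝ)]
    nlinarith [hδ.le, Nat.cast_nonneg (α := ℝ) m]


lemma isRS_self (f k : ℝ → H) (a : ℝ) : IsRSIntegral f k a a 0 := by
  intro ε hε
  refine ⟨1, one_pos, ?_⟩
  intro n p hp0 hpn hm _
  have hall : ∀ i ≤ n, p i = a := by
    intro i hi
    have h1 : p i ≤ a := by rw [← hpn]; exact part_chain hm n le_rfl i hi
    have h2 : a ≤ p i := by rw [← hp0]; exact part_chain hm i hi 0 (Nat.zero_le _)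
    linarith
  have hz : ∀ i ∈ Finset.range n, (inner ℝ (f (p i)) (k (p (i + 1)) - k (p i)) : ℝ) = 0 := by
    intro i hi
    rw [Finset.mem_range] at hi
    rw [hall i hi.le, hall (i + 1) hi, sub_self, inner_zero_right]
  rw [Finset.sum_congr rfl hz, Finset.sum_const_zero]
  simpa using hε

lemma two_partition_diff (f k : ℝ → H) {a b δ ω : ℝ} (hω : 0 ≤ ω)
    (hkbv : BoundedVariationOn k (Set.Icc a b))
    (hfω : ∀ u ∈ Set.Icc a b, ∀ v ∈ Set.Icc a b, |u - v| < δ → ‖f u - f v‖ ≤ ω)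
    {n : ℕ} {p : ℕ → ℝ} (hp0 : p 0 = a) (hpn : p n = b)
    (hpm : ∀ i < n, p i ≤ p (i + 1)) (hpδ : ∀ i < n, p (i + 1) - p i < δ)
    {m : ℕ} {q : ℕ → ℝ} (hq0 : q 0 = a) (hqm : q m = b)
    (hqs : ∀ i < m, q i ≤ q (i + 1)) (hqδ : ∀ i < m, q (i + 1) - q i < δ) :
    |RSsum f k p n - RSsum f k q m| ≤ 2 * (ω * (eVariationOn k (Set.Icc a b)).toReal) := by
  obtain ⟨r, hr0, hrN, hrm, hrefp, hrefq⟩ := exists_common_refinement hp0 hpn hpm hq0 hqm hqs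
  have hmemr := part_mem hr0 hrN hrm
  have hsum : ∑ l ∈ Finset.range (n + m + 1), ‖k (r (l + 1)) - k (r l)‖
      ≤ (eVariationOn k (Set.Icc a b)).toReal := sum_norm_le_var k hkbv hrm hmemr
  have h1 := refine_diff_le f k hω hp0 hpn hpm hpδ hr0 hrN hrm hrefp hfω
  have h2 := refine_diff_le f k hω hq0 hqm hqs hqδ hr0 hrN hrm hrefq hfω
  have h2' : |RSsum f k r (n + m + 1) - RSsum f k q m|
      ≤ ω * ∑ l ∈ Finset.range (n + m + 1), ‖k (r (l + 1)) - k (r l)‖ := by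
    rw [abs_sub_comm]; exact h2
  have habs := abs_sub_le (RSsum f k p n) (RSsum f k r (n + m + 1)) (RSsum f k q m)
  have hmul := mul_le_mul_of_nonneg_left hsum hω
  linarith

lemma isRS_unique {f k : ℝ → H} {a b I J : ℝ} (hab : a ≤ b)
    (hI : IsRSIntegral f k a b I) (hJ : IsRSIntegral f k a b J) : I = J := by
  have key : ∀ ε > (0 : ℝ), |I - J| ≤ 0 + ε := by
    intro ε hε
    obtain ⟨δ1, hδ1, h1⟩ := hI (ε / 2) (by linarith)
    obtain ⟨δ2, hδ2, h2⟩ := hJ (ε / 2) (by linarith)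
    obtain ⟨n, p, hp0, hpn, hm, hmesh⟩ := exists_fine_partition hab (lt_min hδ1 hδ2)
    have e1 : |RSsum f k p n - I| < ε / 2 :=
      h1 n p hp0 hpn hm (fun i hi => (hmesh i hi).trans_le (min_le_left _ _))
    have e2 : |RSsum f k p n - J| < ε / 2 :=
      h2 n p hp0 hpn hm (fun i hi => (hmesh i hi).trans_le (min_le_right _ _))
    have e1' : |I - RSsum f k p n| < ε / 2 := by rw [abs_sub_comm]; exact e1
    have h3 := abs_sub_le I (RSsum f k p n) J
    linarith
  have : |I - J| ≤ 0 := by simpa using le_of_forall_pos_le_add key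
  exact sub_eq_zero.1 (abs_nonpos_iff.1 this)

lemma isRS_concat {f k : ℝ → H} {a b c I1 I2 J : ℝ} (hab : a ≤ b) (hbc : b ≤ c)
    (h1 : IsRSIntegral f k a b I1) (h2 : IsRSIntegral f k b c I2)
    (hJ : IsRSIntegral f k a c J) : J = I1 + I2 := by
  have key : ∀ ε > (0 : ℝ), |J - (I1 + I2)| ≤ 0 + ε := by
    intro ε hε
    obtain ⟨δ1, hδ1, hh1⟩ := h1 (ε / 3) (by linarith)
    obtain ⟨δ2, hδ2, hh2⟩ := h2 (ε / 3) (by linarith)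
    obtain ⟨δ3, hδ3, hh3⟩ := hJ (ε / 3) (by linarith)
    have hδ : 0 < min δ1 (min δ2 δ3) := lt_min hδ1 (lt_min hδ2 hδ3)
    obtain ⟨n, p, hp0, hpn, hpmo, hpme⟩ := exists_fine_partition hab hδ
    obtain ⟨m, q, hq0, hqm, hqmo, hqme⟩ := exists_fine_partition hbc hδ
    set r : ℕ → ℝ := fun l => if l ≤ n then p l else q (l - n) with hr
    have hrq : ∀ l, n ≤ l → r l = q (l - n) := by
      intro l hl1
      by_cases h : l ≤ n
      · have hln : l = n := le_antisymm h hl1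
        subst hln
        simp only [hr, if_pos le_rfl, Nat.sub_self]
        rw [hpn, hq0]
      · simp only [hr, if_neg h]
    have hrp : ∀ l ≤ n, r l = p l := fun l hl => by simp only [hr, if_pos hl]
    have hr0 : r 0 = a := by rw [hrp 0 (Nat.zero_le _), hp0]
    have hrlast : r (n + m) = c := by
      rw [hrq (n + m) (Nat.le_add_right _ _)]
      simp only [Nat.add_sub_cancel_left]
      exact hqm
    have hrmono : ∀ l < n + m, r l ≤ r (l + 1) := by
      intro l hl
      by_cases h : l + 1 ≤ n
      · rw [hrp l (by omega), hrp (l + 1) h]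
        exact hpmo l (by omega)
      · rw [hrq l (by omega), hrq (l + 1) (by omega)]
        have he : l + 1 - n = (l - n) + 1 := by omega
        rw [he]
        exact hqmo (l - n) (by omega)
    have hrmesh : ∀ l < n + m, r (l + 1) - r l < min δ1 (min δ2 δ3) := by
      intro l hl
      by_cases h : l + 1 ≤ n
      · rw [hrp l (by omega), hrp (l + 1) h]
        exact hpme l (by omega)
      · rw [hrq l (by omega), hrq (l + 1) (by omega)]
        have he : l + 1 - n = (l - n) + 1 := by omega
        rw [he]
        exact hqme (l - n) (by omega)
    have hsplit : RSsum f k r (n + m) = RSsum f k p n + RSsum f k q m := by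
      rw [RSsum, RSsum, RSsum, Finset.sum_range_add]
      congr 1
      · apply Finset.sum_congr rfl
        intro i hi
        rw [Finset.mem_range] at hi
        rw [hrp i hi.le, hrp (i + 1) hi]
      · apply Finset.sum_congr rfl
        intro j hj
        rw [Finset.mem_range] at hj
        have e1 : r (n + j) = q j := by
          rw [hrq (n + j) (Nat.le_add_right _ _)]
          congr 1
          omega
        have e2 : r (n + j + 1) = q (j + 1) := by
          rw [hrq (n + j + 1) (by omega)]
          congr 1
          omega
        rw [e1, e2]
    have e1 : |RSsum f k p n - I1| < ε / 3 :=
      hh1 n p hp0 hpn hpmo (fun i hi => (hpme i hi).trans_le (min_le_left _ _))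
    have e2 : |RSsum f k q m - I2| < ε / 3 :=
      hh2 m q hq0 hqm hqmo
        (fun i hi => (hqme i hi).trans_le ((min_le_right _ _).trans (min_le_left _ _)))
    have e3 : |RSsum f k r (n + m) - J| < ε / 3 :=
      hh3 (n + m) r hr0 hrlast hrmono
        (fun i hi => (hrmesh i hi).trans_le ((min_le_right _ _).trans (min_le_right _ _)))
    have e3' : |J - RSsum f k r (n + m)| < ε / 3 := by rw [abs_sub_comm]; exact e3
    have h4 := abs_sub_le J (RSsum f k r (n + m)) (I1 + I2)
    have h5 : |RSsum f k r (n + m) - (I1 + I2)|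
        ≤ |RSsum f k p n - I1| + |RSsum f k q m - I2| := by
      rw [hsplit]
      have : RSsum f k p n + RSsum f k q m - (I1 + I2)
          = (RSsum f k p n - I1) + (RSsum f k q m - I2) := by ring
      rw [this]
      exact abs_add_le _ _
    linarith
  have : |J - (I1 + I2)| ≤ 0 := by simpa using le_of_forall_pos_le_add key
  exact sub_eq_zero.1 (abs_nonpos_iff.1 this)

lemma isRS_exists (f k : ℝ → H) {a b : ℝ} (hab : a ≤ b)
    (hkbv : BoundedVariationOn k (Set.Icc a b))
    (hf : ∀ ε > (0 : ℝ), ∃ δ > (0 : ℝ), ∀ u ∈ Set.Icc a b, ∀ v ∈ Set.Icc a b,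
      |u - v| < δ → ‖f u - f v‖ ≤ ε) :
    ∃ I, IsRSIntegral f k a b I := by
  set V := (eVariationOn k (Set.Icc a b)).toReal with hV
  have hV0 : 0 ≤ V := ENNReal.toReal_nonneg
  set U : ℕ → ℕ → ℝ := fun j i => a + i * ((b - a) / (j + 1)) with hU
  have hU0 : ∀ j, U j 0 = a := by intro j; simp [hU]
  have hUlast : ∀ j, U j (j + 1) = b := by
    intro j
    have hne : ((j : ℝ) + 1) ≠ 0 := by positivity
    simp only [hU]
    push_cast
    field_simp
    ring
  have hUstep : ∀ j i, U j (i + 1) - U j i = (b - a) / (j + 1) := by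
    intro j i; simp only [hU]; push_cast; ring
  have hUmono : ∀ j, ∀ i < j + 1, U j i ≤ U j (i + 1) := by
    intro j i _
    have h1 : (0 : ℝ) ≤ (b - a) / ((j : ℝ) + 1) := div_nonneg (sub_nonneg.2 hab) (by positivity)
    simp only [hU]
    push_cast
    nlinarith [h1]
  set S : ℕ → ℝ := fun j => RSsum f k (U j) (j + 1) with hS
  have hmesh_small : ∀ δ > (0 : ℝ), ∃ M : ℕ, ∀ j ≥ M, (b - a) / (j + 1) < δ := by
    intro δ hδ
    obtain ⟨M, hM⟩ := exists_nat_gt ((b - a) / δ)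
    refine ⟨M, fun j hj => ?_⟩
    rw [div_lt_iff₀ (by positivity)]
    rw [div_lt_iff₀ hδ] at hM
    have hMj : (M : ℝ) ≤ j := Nat.cast_le.2 hj
    nlinarith
  have key : ∀ ω : ℝ, 0 ≤ ω → ∀ δ : ℝ,
      (∀ u ∈ Set.Icc a b, ∀ v ∈ Set.Icc a b, |u - v| < δ → ‖f u - f v‖ ≤ ω) →
      ∀ n : ℕ, ∀ p : ℕ → ℝ, p 0 = a → p n = b → (∀ i < n, p i ≤ p (i + 1)) →
      (∀ i < n, p (i + 1) - p i < δ) →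
      ∀ m : ℕ, ∀ q : ℕ → ℝ, q 0 = a → q m = b → (∀ i < m, q i ≤ q (i + 1)) →
      (∀ i < m, q (i + 1) - q i < δ) →
      |RSsum f k p n - RSsum f k q m| ≤ 2 * (ω * V) :=
    fun ω hω δ hfω n p hp0 hpn hpm hpδ m q hq0 hqm hqs hqδ =>
      two_partition_diff f k hω hkbv hfω hp0 hpn hpm hpδ hq0 hqm hqs hqδ
  have hcauchy : CauchySeq S := by
    rw [Metric.cauchySeq_iff']
    intro ε hε
    set ω := ε / (2 * (V + 1)) with hω
    have hωpos : 0 < ω := div_pos hε (by linarith)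
    obtain ⟨δ, hδ, hfω⟩ := hf ω hωpos
    obtain ⟨M, hM⟩ := hmesh_small δ hδ
    refine ⟨M, fun j hj => ?_⟩
    have hb : |S j - S M| ≤ 2 * (ω * V) :=
      key ω hωpos.le δ hfω (j + 1) (U j) (hU0 j) (hUlast j) (hUmono j)
        (fun i _ => by rw [hUstep j i]; exact hM j hj) (M + 1) (U M) (hU0 M) (hUlast M)
        (hUmono M) (fun i _ => by rw [hUstep M i]; exact hM M le_rfl)
    have hne : (2 * (V + 1)) ≠ 0 := by positivity
    have h2 : 2 * (ω * (V + 1)) = ε := by rw [hω]; field_simp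
    have hlt : 2 * (ω * V) < ε := by nlinarith
    rw [Real.dist_eq]
    exact lt_of_le_of_lt hb hlt
  obtain ⟨I, hI⟩ := cauchySeq_tendsto_of_complete hcauchy
  refine ⟨I, ?_⟩
  intro ε hε
  set ω := ε / (4 * (V + 1)) with hω
  have hωpos : 0 < ω := div_pos hε (by linarith)
  obtain ⟨δ, hδ, hfω⟩ := hf ω hωpos
  refine ⟨δ, hδ, ?_⟩
  intro n p hp0 hpn hpm hpδ
  obtain ⟨M, hM⟩ := hmesh_small δ hδ
  have hbound : ∀ j ≥ M, |RSsum f k p n - S j| ≤ 2 * (ω * V) := fun j hj =>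
    key ω hωpos.le δ hfω n p hp0 hpn hpm hpδ (j + 1) (U j) (hU0 j) (hUlast j)
      (hUmono j) (fun i _ => by rw [hUstep j i]; exact hM j hj)
  have htend : Filter.Tendsto (fun j => |RSsum f k p n - S j|) Filter.atTop
      (nhds |RSsum f k p n - I|) := (tendsto_const_nhds.sub hI).abs
  have hle : |RSsum f k p n - I| ≤ 2 * (ω * V) :=
    le_of_tendsto htend (Filter.eventually_atTop.2 ⟨M, hbound⟩)
  have hne : (4 * (V + 1)) ≠ 0 := by positivity
  have h4 : 4 * (ω * (V + 1)) = ε := by rw [hω]; field_simp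
  have hlt : 2 * (ω * V) < ε := by nlinarith
  exact lt_of_le_of_lt hle hlt

lemma isRS_sub_le {f g k : ℝ → H} {a b c I J : ℝ} (hab : a ≤ b) (hc : 0 ≤ c)
    (hkbv : BoundedVariationOn k (Set.Icc a b))
    (hfg : ∀ u ∈ Set.Icc a b, ‖f u - g u‖ ≤ c)
    (hI : IsRSIntegral f k a b I) (hJ : IsRSIntegral g k a b J) :
    |I - J| ≤ c * (eVariationOn k (Set.Icc a b)).toReal := by
  apply le_of_forall_pos_le_add
  intro ε hε
  obtain ⟨δ1, hδ1, h1⟩ := hI (ε / 2) (by linarith)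
  obtain ⟨δ2, hδ2, h2⟩ := hJ (ε / 2) (by linarith)
  obtain ⟨n, p, hp0, hpn, hm, hmesh⟩ := exists_fine_partition hab (lt_min hδ1 hδ2)
  have e1 : |RSsum f k p n - I| < ε / 2 :=
    h1 n p hp0 hpn hm (fun i hi => (hmesh i hi).trans_le (min_le_left _ _))
  have e2 : |RSsum g k p n - J| < ε / 2 :=
    h2 n p hp0 hpn hm (fun i hi => (hmesh i hi).trans_le (min_le_right _ _))
  have hmemp := part_mem hp0 hpn hm
  have hdiff : |RSsum f k p n - RSsum g k p n|
      ≤ c * (eVariationOn k (Set.Icc a b)).toReal := by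
    rw [RSsum, RSsum, ← Finset.sum_sub_distrib]
    have heach : ∀ i ∈ Finset.range n,
        (inner ℝ (f (p i)) (k (p (i + 1)) - k (p i)) : ℝ)
          - (inner ℝ (g (p i)) (k (p (i + 1)) - k (p i)) : ℝ)
        = (inner ℝ (f (p i) - g (p i)) (k (p (i + 1)) - k (p i)) : ℝ) :=
      fun i _ => (inner_sub_left _ _ _).symm
    rw [Finset.sum_congr rfl heach]
    calc |∑ i ∈ Finset.range n, (inner ℝ (f (p i) - g (p i)) (k (p (i + 1)) - k (p i)) : ℝ)|
        ≤ ∑ i ∈ Finset.range n, |(inner ℝ (f (p i) - g (p i)) (k (p (i + 1)) - k (p i)) : ℝ)| :=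
          Finset.abs_sum_le_sum_abs _ _
      _ ≤ ∑ i ∈ Finset.range n, c * ‖k (p (i + 1)) - k (p i)‖ := by
          apply Finset.sum_le_sum
          intro i hi
          rw [Finset.mem_range] at hi
          calc |(inner ℝ (f (p i) - g (p i)) (k (p (i + 1)) - k (p i)) : ℝ)|
              ≤ ‖f (p i) - g (p i)‖ * ‖k (p (i + 1)) - k (p i)‖ := abs_real_inner_le_norm _ _
            _ ≤ c * ‖k (p (i + 1)) - k (p i)‖ :=
                mul_le_mul_of_nonneg_right (hfg _ (hmemp i hi.le)) (norm_nonneg _)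
      _ = c * ∑ i ∈ Finset.range n, ‖k (p (i + 1)) - k (p i)‖ := (Finset.mul_sum _ _ _).symm
      _ ≤ c * (eVariationOn k (Set.Icc a b)).toReal :=
          mul_le_mul_of_nonneg_left (sum_norm_le_var k hkbv hm hmemp) hc
  have h3 := abs_sub_le I (RSsum f k p n) J
  have h4 := abs_sub_le (RSsum f k p n) (RSsum g k p n) J
  have e1' : |I - RSsum f k p n| < ε / 2 := by rw [abs_sub_comm]; exact e1
  linarith

lemma sum_evar_le (k : ℝ → H) {τ : ℕ → ℝ} {n : ℕ} (hm : ∀ i < n, τ i ≤ τ (i + 1))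
    (hkbv : BoundedVariationOn k (Set.Icc (τ 0) (τ n))) :
    ∑ i ∈ Finset.range n, (eVariationOn k (Set.Icc (τ i) (τ (i + 1)))).toReal
      ≤ (eVariationOn k (Set.Icc (τ 0) (τ n))).toReal := by
  have key : ∀ j ≤ n, ∑ i ∈ Finset.range j, eVariationOn k (Set.Icc (τ i) (τ (i + 1)))
      ≤ eVariationOn k (Set.Icc (τ 0) (τ j)) := by
    intro j hj
    induction j with
    | zero => simp
    | succ j ih =>
      rw [Finset.sum_range_succ]
      have h1 := ih (le_trans (Nat.le_succ j) hj)
      have h2 : eVariationOn k (Set.Icc (τ 0) (τ j)) + eVariationOn k (Set.Icc (τ j) (τ (j + 1)))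
          = eVariationOn k (Set.Icc (τ 0) (τ (j + 1))) := by
        have := eVariationOn.Icc_add_Icc k (s := Set.univ)
          (part_chain hm j (le_trans (Nat.le_succ j) hj) 0 (Nat.zero_le _))
          (hm j (Nat.lt_of_succ_le hj)) (Set.mem_univ (τ j))
        simpa [Set.univ_inter] using this
      calc ∑ i ∈ Finset.range j, eVariationOn k (Set.Icc (τ i) (τ (i + 1)))
            + eVariationOn k (Set.Icc (τ j) (τ (j + 1)))
          ≤ eVariationOn k (Set.Icc (τ 0) (τ j))
            + eVariationOn k (Set.Icc (τ j) (τ (j + 1))) := add_le_add_left h1 _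
        _ = _ := h2
  have h := key n le_rfl
  have hne : ∀ i ∈ Finset.range n, eVariationOn k (Set.Icc (τ i) (τ (i + 1))) ≠ ⊤ := by
    intro i hi
    rw [Finset.mem_range] at hi
    apply ne_top_of_le_ne_top hkbv
    apply eVariationOn.mono
    apply Set.Icc_subset_Icc
    · exact part_chain hm i hi.le 0 (Nat.zero_le _)
    · exact part_chain hm n le_rfl (i + 1) hi
  have hsfin : (∑ i ∈ Finset.range n, eVariationOn k (Set.Icc (τ i) (τ (i + 1)))) ≠ ⊤ :=
    ne_top_of_le_ne_top hkbv h
  calc ∑ i ∈ Finset.range n, (eVariationOn k (Set.Icc (τ i) (τ (i + 1)))).toReal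
      = (∑ i ∈ Finset.range n, eVariationOn k (Set.Icc (τ i) (τ (i + 1)))).toReal :=
        (ENNReal.toReal_sum hne).symm
    _ ≤ _ := (ENNReal.toReal_le_toReal hsfin hkbv).2 h

lemma contOn_uc {f : ℝ → H} {a b : ℝ} (hf : ContinuousOn f (Set.Icc a b)) :
    ∀ ε > (0 : ℝ), ∃ δ > (0 : ℝ), ∀ u ∈ Set.Icc a b, ∀ v ∈ Set.Icc a b,
      |u - v| < δ → ‖f u - f v‖ ≤ ε := by
  have huc := (isCompact_Icc (a := a) (b := b)).uniformContinuousOn_of_continuous hf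
  rw [Metric.uniformContinuousOn_iff] at huc
  intro ε hε
  obtain ⟨δ, hδ, h⟩ := huc ε hε
  refine ⟨δ, hδ, fun u hu v hv huv => ?_⟩
  have := h u hu v hv (by rwa [Real.dist_eq])
  rw [← dist_eq_norm]
  exact this.le

lemma epigraph_closed {E' : Type*} [TopologicalSpace E'] {φ : E' → EReal}
    (hlsc : LowerSemicontinuous φ) :
    IsClosed {p : E' × ℝ | φ p.1 ≤ ((p.2 : ℝ) : EReal)} := by
  rw [← isOpen_compl_iff, isOpen_iff_mem_nhds]
  rintro ⟨v, w⟩ hp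
  simp only [Set.mem_compl_iff, Set.mem_setOf_eq, not_le] at hp
  obtain ⟨c, hc1, hc2⟩ := EReal.exists_between_coe_real hp
  have hev : ∀ᶠ v' in nhds v, (c : EReal) < φ v' := hlsc v (c : EReal) hc2
  have hwc : w < c := EReal.coe_lt_coe_iff.1 hc1
  rw [nhds_prod_eq]
  apply Filter.mem_of_superset (Filter.prod_mem_prod hev (Iio_mem_nhds hwc))
  rintro ⟨v', w'⟩ ⟨h1, h2⟩
  simp only [Set.mem_compl_iff, Set.mem_setOf_eq, not_le]
  exact lt_trans (EReal.coe_lt_coe_iff.2 h2) h1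


end RSLemmas

/-- For a proper convex l.s.c. `φ`, a continuous `x` and a BV `k` with `k 0 = 0` and
`φ ∘ x ∈ L¹(0,T)`, the subdifferential inequality tested against all continuous
functions `y` is equivalent to the one tested against all constants `z`. -/
theorem subdifferential_inequality_continuous_iff_const
    {d : ℕ} (φ : EuclideanSpace ℝ (Fin d) → EReal)
    (hbot : ∀ v, φ v ≠ ⊥) (hproper : ∃ v, φ v ≠ ⊤)
    (hconv : Convex ℝ {p : EuclideanSpace ℝ (Fin d) × ℝ | φ p.1 ≤ ((p.2 : ℝ) : EReal)})
    (hlsc : LowerSemicontinuous φ)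
    (T : ℝ) (hT : 0 ≤ T)
    (x k : ℝ → EuclideanSpace ℝ (Fin d))
    (hx : ContinuousOn x (Set.Icc 0 T))
    (hkcont : ContinuousOn k (Set.Icc 0 T))
    (hkbv : BoundedVariationOn k (Set.Icc 0 T)) (hk0 : k 0 = 0)
    (hfin : ∀ t ∈ Set.Icc 0 T, φ (x t) ≠ ⊤)
    (hL1 : IntegrableOn (fun t => (φ (x t)).toReal) (Set.Icc 0 T)) :
    (∀ y : ℝ → EuclideanSpace ℝ (Fin d), Continuous y →
      ∀ s t : ℝ, 0 ≤ s → s ≤ t → t ≤ T →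
      ∀ I : ℝ, IsRSIntegral (fun r => y r - x r) k s t I →
        (((I + ∫ r in s..t, (φ (x r)).toReal) : ℝ) : EReal)
          ≤ ERealIntegral (fun r => φ (y r)) s t) ↔
    (∀ z : EuclideanSpace ℝ (Fin d),
      ∀ s t : ℝ, 0 ≤ s → s ≤ t → t ≤ T →
      ∀ I : ℝ, IsRSIntegral (fun r => z - x r) k s t I →
        (((I + ∫ r in s..t, (φ (x r)).toReal) : ℝ) : EReal)
          ≤ (((t - s : ℝ)) : EReal) * φ z) := by
  constructor
  · -- (a) → (b) : take y constant
    intro ha z s t hs hst htT I hI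
    have h1 := ha (fun _ => z) continuous_const s t hs hst htT I hI
    rcases eq_or_lt_of_le hst with rfl | hst'
    · have hI0 : I = 0 := isRS_unique (le_refl s) hI (isRS_self (fun r => (fun _ : ℝ => z) r - x r) k s)
      rw [hI0, intervalIntegral.integral_same, sub_self]
      simp only [add_zero, EReal.coe_zero, zero_mul]
      exact le_refl _
    · by_cases hz : φ z = ⊤
      · rw [hz, EReal.coe_mul_top_of_pos (by linarith : (0 : ℝ) < t - s)]
        exact le_top
      · have h2 : ERealIntegral (fun r => φ ((fun _ : ℝ => z) r)) s t
            = (((t - s) * (φ z).toReal : ℝ) : EReal) := by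
          rw [ERealIntegral,
            if_pos ⟨fun r _ => hz, integrableOn_const measure_Icc_lt_top.ne⟩]
          rw [intervalIntegral.integral_const, smul_eq_mul]
        rw [h2] at h1
        have h3 : (((t - s) * (φ z).toReal : ℝ) : EReal) = ((t - s : ℝ) : EReal) * φ z := by
          rw [EReal.coe_mul]
          congr 1
          exact EReal.coe_toReal hz (hbot z)
        rw [← h3]
        exact h1
  · -- (b) → (a) : approximation by piecewise averages
    intro hb y hy s t hs hst htT I hI
    by_cases hcond : (∀ r ∈ Set.Icc s t, φ (y r) ≠ ⊤)
        ∧ IntegrableOn (fun r => (φ (y r)).toReal) (Set.Icc s t) volume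
    swap
    · rw [ERealIntegral, if_neg hcond]
      exact le_top
    obtain ⟨hfiny, hinty⟩ := hcond
    rw [ERealIntegral, if_pos ⟨hfiny, hinty⟩]
    rcases eq_or_lt_of_le hst with rfl | hst'
    · have hI0 : I = 0 := isRS_unique (le_refl s) hI (isRS_self (fun r => y r - x r) k s)
      rw [hI0, intervalIntegral.integral_same, intervalIntegral.integral_same, add_zero]
    rw [EReal.coe_le_coe_iff]
    have hsub : Set.Icc s t ⊆ Set.Icc 0 T := Set.Icc_subset_Icc hs htT
    have hkbv' : BoundedVariationOn k (Set.Icc s t) := hkbv.mono hsub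
    set V := (eVariationOn k (Set.Icc s t)).toReal with hV
    have hV0 : 0 ≤ V := ENNReal.toReal_nonneg
    have hepi := epigraph_closed hlsc
    have hyuc := contOn_uc (hy.continuousOn : ContinuousOn y (Set.Icc s t))
    have hgx : ContinuousOn (fun r => y r - x r) (Set.Icc 0 T) := hy.continuousOn.sub hx
    apply le_of_forall_pos_le_add
    intro ε hε
    set ε' := ε / (V + 1) with hε'
    have hε'pos : 0 < ε' := div_pos hε (by linarith)
    obtain ⟨δ, hδpos, hδ⟩ := hyuc ε' hε'pos
    obtain ⟨n0, hn0⟩ := exists_nat_gt ((t - s) / δ)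
    set n := n0 + 1 with hn
    set Δ := (t - s) / n with hΔ
    have hΔpos : 0 < Δ := div_pos (by linarith) (by positivity)
    have hΔδ : Δ < δ := by
      rw [hΔ, div_lt_iff₀ (by positivity : (0 : ℝ) < (n : ℝ))]
      rw [div_lt_iff₀ hδpos] at hn0
      have hc : (n0 : ℝ) + 1 ≤ (n : ℝ) := by rw [hn]; push_cast; linarith
      nlinarith
    set τ : ℕ → ℝ := fun i => s + i * Δ with hτ
    have hτ0 : τ 0 = s := by simp [hτ]
    have hτn : τ n = t := by
      have hne : (n : ℝ) ≠ 0 := by positivity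
      simp only [hτ, hΔ]
      field_simp
      ring
    have hτstep : ∀ i, τ (i + 1) - τ i = Δ := by
      intro i; simp only [hτ]; push_cast; ring
    have hτmono : ∀ i < n, τ i ≤ τ (i + 1) := by
      intro i _
      have := hτstep i
      nlinarith [hΔpos]
    have hτmem : ∀ i ≤ n, τ i ∈ Set.Icc s t := part_mem hτ0 hτn hτmono
    have hpc : ∀ i < n, Set.Icc (τ i) (τ (i + 1)) ⊆ Set.Icc s t := by
      intro i hi
      exact Set.Icc_subset_Icc (hτmem i hi.le).1 (hτmem (i + 1) hi).2
    have hpc0T : ∀ i < n, Set.Icc (τ i) (τ (i + 1)) ⊆ Set.Icc 0 T := by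
      intro i hi
      exact (hpc i hi).trans hsub
    have hIocsub : ∀ i < n, Set.Ioc (τ i) (τ (i + 1)) ⊆ Set.Icc s t := by
      intro i hi
      exact Set.Ioc_subset_Icc_self.trans (hpc i hi)
    have hinty' : ∀ i < n, IntegrableOn (fun r => (φ (y r)).toReal)
        (Set.Ioc (τ i) (τ (i + 1))) volume :=
      fun i hi => hinty.mono_set (hIocsub i hi)
    have hyint : ∀ i < n, IntegrableOn y (Set.Ioc (τ i) (τ (i + 1))) volume :=
      fun i _ => hy.integrableOn_Ioc
    have hμ : ∀ i < n, (volume (Set.Ioc (τ i) (τ (i + 1)))).toReal = Δ := by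
      intro i _
      rw [Real.volume_Ioc, hτstep i, ENNReal.toReal_ofReal hΔpos.le]
    have hμne : ∀ i < n, volume (Set.Ioc (τ i) (τ (i + 1))) ≠ 0 := by
      intro i _
      rw [Real.volume_Ioc, hτstep i]
      simp only [ne_eq, ENNReal.ofReal_eq_zero, not_le]
      exact hΔpos
    set z : ℕ → EuclideanSpace ℝ (Fin d) :=
      fun i => Δ⁻¹ • ∫ r in Set.Ioc (τ i) (τ (i + 1)), y r with hz
    have hjensen : ∀ i < n, φ (z i)
        ≤ (((Δ⁻¹ * ∫ r in Set.Ioc (τ i) (τ (i + 1)), (φ (y r)).toReal) : ℝ) : EReal) := by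
      intro i hi
      have hfs : ∀ᵐ r ∂(volume.restrict (Set.Ioc (τ i) (τ (i + 1)))),
          (y r, (φ (y r)).toReal)
            ∈ {p : EuclideanSpace ℝ (Fin d) × ℝ | φ p.1 ≤ ((p.2 : ℝ) : EReal)} := by
        rw [ae_restrict_iff' measurableSet_Ioc]
        apply ae_of_all
        intro r hr
        exact le_of_eq (EReal.coe_toReal (hfiny r (hIocsub i hi hr)) (hbot _)).symm
      have hfi : IntegrableOn (fun r => (y r, (φ (y r)).toReal))
          (Set.Ioc (τ i) (τ (i + 1))) volume :=
        (hyint i hi).prodMk (hinty' i hi)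
      have hmem := hconv.set_average_mem hepi (hμne i hi) (ne_of_lt measure_Ioc_lt_top) hfs hfi
      rw [setAverage_eq, integral_pair (hyint i hi) (hinty' i hi), measureReal_def, hμ i hi] at hmem
      simp only [Prod.smul_mk, smul_eq_mul, Set.mem_setOf_eq] at hmem
      simp only [hz]
      exact hmem
    have hzne : ∀ i < n, φ (z i) ≠ ⊤ :=
      fun i hi => ne_top_of_le_ne_top (EReal.coe_ne_top _) (hjensen i hi)
    have hjr : ∀ i < n, Δ * (φ (z i)).toReal
        ≤ ∫ r in (τ i)..(τ (i + 1)), (φ (y r)).toReal := by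
      intro i hi
      have h1 := EReal.toReal_le_toReal (hjensen i hi) (hbot _) (EReal.coe_ne_top _)
      rw [EReal.toReal_coe] at h1
      have h2 : Δ * (φ (z i)).toReal
          ≤ Δ * (Δ⁻¹ * ∫ r in Set.Ioc (τ i) (τ (i + 1)), (φ (y r)).toReal) :=
        mul_le_mul_of_nonneg_left h1 hΔpos.le
      rw [intervalIntegral.integral_of_le (hτmono i hi)]
      calc Δ * (φ (z i)).toReal
          ≤ Δ * (Δ⁻¹ * ∫ r in Set.Ioc (τ i) (τ (i + 1)), (φ (y r)).toReal) := h2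
        _ = ∫ r in Set.Ioc (τ i) (τ (i + 1)), (φ (y r)).toReal := by
            rw [← mul_assoc, mul_inv_cancel₀ hΔpos.ne', one_mul]
    -- Riemann-Stieltjes integrals on the pieces
    have hJex : ∀ i : ℕ, ∃ Ji : ℝ, i < n →
        IsRSIntegral (fun r => z i - x r) k (τ i) (τ (i + 1)) Ji := by
      intro i
      by_cases hi : i < n
      · obtain ⟨Ji, hJi⟩ := isRS_exists (fun r => z i - x r) k (hτmono i hi)
          (hkbv.mono (hpc0T i hi))
          (contOn_uc (continuousOn_const.sub (hx.mono (hpc0T i hi))))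
        exact ⟨Ji, fun _ => hJi⟩
      · exact ⟨0, fun h => absurd h hi⟩
    have hKex : ∀ i : ℕ, ∃ Ki : ℝ, i < n →
        IsRSIntegral (fun r => y r - x r) k (τ i) (τ (i + 1)) Ki := by
      intro i
      by_cases hi : i < n
      · obtain ⟨Ki, hKi⟩ := isRS_exists (fun r => y r - x r) k (hτmono i hi)
          (hkbv.mono (hpc0T i hi)) (contOn_uc (hgx.mono (hpc0T i hi)))
        exact ⟨Ki, fun _ => hKi⟩
      · exact ⟨0, fun h => absurd h hi⟩
    have hAex : ∀ j : ℕ, ∃ Aj : ℝ, j ≤ n →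
        IsRSIntegral (fun r => y r - x r) k s (τ j) Aj := by
      intro j
      by_cases hj : j ≤ n
      · have hsτ : s ≤ τ j := (hτmem j hj).1
        have hsubj : Set.Icc s (τ j) ⊆ Set.Icc 0 T :=
          Set.Icc_subset_Icc hs (le_trans (hτmem j hj).2 htT)
        obtain ⟨Aj, hAj⟩ := isRS_exists (fun r => y r - x r) k hsτ
          (hkbv.mono hsubj) (contOn_uc (hgx.mono hsubj))
        exact ⟨Aj, fun _ => hAj⟩
      · exact ⟨0, fun h => absurd h hj⟩
    choose J hJ using hJex
    choose K hK using hKex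
    choose A hA using hAex
    -- I = ∑ K i
    have hAsum : ∀ j ≤ n, A j = ∑ i ∈ Finset.range j, K i := by
      intro j
      induction j with
      | zero =>
        intro _
        have h0 := hA 0 (Nat.zero_le _)
        rw [hτ0] at h0
        rw [Finset.sum_range_zero]
        exact isRS_unique le_rfl h0 (isRS_self _ _ _)
      | succ j ih =>
        intro hj
        have hjn : j < n := Nat.lt_of_succ_le hj
        have h1 := hA j hjn.le
        have h2 := hK j hjn
        have h3 := hA (j + 1) hj
        have := isRS_concat (hτmem j hjn.le).1 (hτmono j hjn) h1 h2 h3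
        rw [this, ih hjn.le, Finset.sum_range_succ]
    have hIA : I = ∑ i ∈ Finset.range n, K i := by
      have h1 := hA n le_rfl
      rw [hτn] at h1
      rw [← hAsum n le_rfl]
      exact isRS_unique hst hI h1
    -- compare J and K
    have hzy : ∀ i < n, ∀ u ∈ Set.Icc (τ i) (τ (i + 1)), ‖z i - y u‖ ≤ ε' := by
      intro i hi u hu
      have hyu : IntegrableOn (fun _ : ℝ => y u) (Set.Ioc (τ i) (τ (i + 1))) volume :=
        integrableOn_const measure_Ioc_lt_top.ne
      have hconst : ∫ r in Set.Ioc (τ i) (τ (i + 1)), (y r - y u)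
          = (∫ r in Set.Ioc (τ i) (τ (i + 1)), y r) - Δ • y u := by
        rw [integral_sub (hyint i hi) hyu]
        congr 1
        rw [setIntegral_const, measureReal_def, hμ i hi]
      have hnorm : ‖∫ r in Set.Ioc (τ i) (τ (i + 1)), (y r - y u)‖ ≤ ε' * Δ := by
        have hb1 : ∀ r ∈ Set.Ioc (τ i) (τ (i + 1)), ‖y r - y u‖ ≤ ε' := by
          intro r hr
          apply hδ r (hIocsub i hi hr) u (hpc i hi hu)
          have h1 := hτstep i
          have h2 : |r - u| ≤ Δ := by
            rw [abs_sub_le_iff]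
            constructor <;> [skip; skip] <;>
              (first
                | (have := hr.1.le; have := hr.2; have := hu.1; have := hu.2; linarith))
          linarith
        have := norm_setIntegral_le_of_norm_le_const (μ := volume)
          (s := Set.Ioc (τ i) (τ (i + 1))) measure_Ioc_lt_top hb1
        rw [measureReal_def, hμ i hi] at this
        exact this
      have heq : z i - y u = Δ⁻¹ • (∫ r in Set.Ioc (τ i) (τ (i + 1)), (y r - y u)) := by
        rw [hconst, smul_sub]
        simp only [hz]
        rw [smul_smul, inv_mul_cancel₀ hΔpos.ne', one_smul]
      rw [heq, norm_smul, norm_inv, Real.norm_eq_abs, abs_of_pos hΔpos]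
      calc Δ⁻¹ * ‖∫ r in Set.Ioc (τ i) (τ (i + 1)), (y r - y u)‖
          ≤ Δ⁻¹ * (ε' * Δ) :=
            mul_le_mul_of_nonneg_left hnorm (inv_nonneg.2 hΔpos.le)
        _ = ε' := by field_simp
    have hJK : ∀ i < n, |J i - K i|
        ≤ ε' * (eVariationOn k (Set.Icc (τ i) (τ (i + 1)))).toReal := by
      intro i hi
      apply isRS_sub_le (hτmono i hi) hε'pos.le (hkbv.mono (hpc0T i hi))
        ?_ (hJ i hi) (hK i hi)
      intro u hu
      have : z i - x u - (y u - x u) = z i - y u := by abel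
      rw [this]
      exact hzy i hi u hu
    -- apply hypothesis (b) on the pieces
    set P : ℕ → ℝ := fun i => ∫ r in (τ i)..(τ (i + 1)), (φ (x r)).toReal with hP
    have hbs : ∀ i < n, J i + P i ≤ Δ * (φ (z i)).toReal := by
      intro i hi
      have h0i : 0 ≤ τ i := le_trans hs (hτmem i hi.le).1
      have hiT : τ (i + 1) ≤ T := le_trans (hτmem (i + 1) hi).2 htT
      have h1 := hb (z i) (τ i) (τ (i + 1)) h0i (hτmono i hi) hiT (J i) (hJ i hi)
      rw [hτstep i] at h1
      have h2 : ((Δ : ℝ) : EReal) * φ (z i) = ((Δ * (φ (z i)).toReal : ℝ) : EReal) := by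
        rw [EReal.coe_mul]
        congr 1
        exact (EReal.coe_toReal (hzne i hi) (hbot _)).symm
      rw [h2] at h1
      exact EReal.coe_le_coe_iff.1 h1
    -- summing up
    have hintx : ∀ i, i < n → IntervalIntegrable (fun r => (φ (x r)).toReal)
        volume (τ i) (τ (i + 1)) := by
      intro i hi
      rw [intervalIntegrable_iff_integrableOn_Ioc_of_le (hτmono i hi)]
      exact hL1.mono_set ((Set.Ioc_subset_Icc_self).trans (hpc0T i hi))
    have hinti_y : ∀ i, i < n → IntervalIntegrable (fun r => (φ (y r)).toReal)
        volume (τ i) (τ (i + 1)) := by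
      intro i hi
      rw [intervalIntegrable_iff_integrableOn_Ioc_of_le (hτmono i hi)]
      exact hinty' i hi
    have hsumP : ∑ i ∈ Finset.range n, P i = ∫ r in s..t, (φ (x r)).toReal := by
      rw [hP]
      have := intervalIntegral.sum_integral_adjacent_intervals (a := τ) (μ := volume) hintx
      rw [hτ0, hτn] at this
      exact this
    have hsumY : ∑ i ∈ Finset.range n, ∫ r in (τ i)..(τ (i + 1)), (φ (y r)).toReal
        = ∫ r in s..t, (φ (y r)).toReal := by
      have := intervalIntegral.sum_integral_adjacent_intervals (a := τ) (μ := volume) hinti_y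
      rw [hτ0, hτn] at this
      exact this
    have hsum1 : ∑ i ∈ Finset.range n, (J i + P i)
        ≤ ∫ r in s..t, (φ (y r)).toReal := by
      rw [← hsumY]
      apply Finset.sum_le_sum
      intro i hi
      rw [Finset.mem_range] at hi
      exact le_trans (hbs i hi) (hjr i hi)
    rw [Finset.sum_add_distrib, hsumP] at hsum1
    have hJKsum : |∑ i ∈ Finset.range n, J i - ∑ i ∈ Finset.range n, K i| ≤ ε' * V := by
      rw [← Finset.sum_sub_distrib]
      calc |∑ i ∈ Finset.range n, (J i - K i)|
          ≤ ∑ i ∈ Finset.range n, |J i - K i| := Finset.abs_sum_le_sum_abs _ _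
        _ ≤ ∑ i ∈ Finset.range n,
              ε' * (eVariationOn k (Set.Icc (τ i) (τ (i + 1)))).toReal := by
            apply Finset.sum_le_sum
            intro i hi
            rw [Finset.mem_range] at hi
            exact hJK i hi
        _ = ε' * ∑ i ∈ Finset.range n,
              (eVariationOn k (Set.Icc (τ i) (τ (i + 1)))).toReal := (Finset.mul_sum _ _ _).symm
        _ ≤ ε' * V := by
            apply mul_le_mul_of_nonneg_left _ hε'pos.le
            have hkbvτ : BoundedVariationOn k (Set.Icc (τ 0) (τ n)) := by
              rw [hτ0, hτn]; exact hkbv'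
            have := sum_evar_le k hτmono hkbvτ
            rw [hτ0, hτn] at this
            exact this
    have hε'V : ε' * V ≤ ε := by
      rw [hε', div_mul_eq_mul_div, div_le_iff₀ (by linarith : (0 : ℝ) < V + 1)]
      nlinarith
    have h6 := (abs_le.1 hJKsum).1
    rw [hIA]
    linarith
end
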